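/- arXiv:1611.06081 — 10 statements merged into one kernel-verified Lean document; each statement's English description precedes it below -/
import Mathlib

section
/- Let m ≥ 2 and p ≥ 0 be integers, let R₀ > 0, and let (α_i)_{i≥0} and (β_i)_{i≥0} be real sequences such that the power series A(r) = Σ_{i≥0} α_i r^i and B(r) = Σ_{i≥0} β_i r^i converge for every r ∈ [0, R₀), with α₀ = m−1, α₁ = 0, β₀ = p(p+m−2) and β₁ = 0. Then there exists a real sequence (ξ_i)_{i≥0} with ξ_i = 0 for all i < p and ξ_p = 1, such that the power series a(r) = Σ_{i≥0} ξ_i r^i converges for every r ∈ [0, R₀), and a satisfies the singular Sturm–Liouville equation r² a''(r) + A(r)·r·a'(r) − B(r)·a(r) = 0 for all r ∈ (0, R₀). -/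
open Set Finset

noncomputable def xiSL (m p : ℕ) (α β : ℕ → ℝ) : ℕ → ℝ
  | n =>
    if p < n then
      -(1 / (((n : ℝ) - p) * ((n : ℝ) + p + m - 2))) *
        ∑ j ∈ (Finset.range n).attach,
          (α (n - j.1) * (j.1 : ℝ) - β (n - j.1)) * xiSL m p α β j.1
    else if n = p then 1 else 0
  decreasing_by exact Finset.mem_range.mp j.2

lemma xiSL_lt {m p : ℕ} {α β : ℕ → ℝ} {n : ℕ} (hn : n < p) : xiSL m p α β n = 0 := by
  rw [xiSL]
  simp [Nat.not_lt.mpr hn.le, hn.ne, (by omega : ¬ p < n)]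

lemma xiSL_self {m p : ℕ} {α β : ℕ → ℝ} : xiSL m p α β p = 1 := by
  rw [xiSL]; simp

lemma xiSL_gt {m p : ℕ} {α β : ℕ → ℝ} {n : ℕ} (hn : p < n) :
    xiSL m p α β n = -(1 / (((n : ℝ) - p) * ((n : ℝ) + p + m - 2))) *
      ∑ j ∈ Finset.range n, (α (n - j) * (j : ℝ) - β (n - j)) * xiSL m p α β j := by
  rw [xiSL]
  simp only [hn, if_true]
  congr 1
  exact Finset.sum_attach _ fun j => (α (n - j) * (j : ℝ) - β (n - j)) * xiSL m p α β j

section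
variable {m p : ℕ} {α β : ℕ → ℝ}

lemma FSL_pos (hm : 2 ≤ m) {n : ℕ} (hn : p < n) :
    0 < ((n : ℝ) - p) * ((n : ℝ) + p + m - 2) := by
  have h1 : (0:ℝ) < (n:ℝ) - p := by
    have : (p:ℝ) < (n:ℝ) := by exact_mod_cast hn
    linarith
  have h2 : (0:ℝ) < (n:ℝ) + p + m - 2 := by
    have hm' : (2:ℝ) ≤ m := by exact_mod_cast hm
    have h3 : (0:ℝ) ≤ (n:ℝ) := Nat.cast_nonneg n
    have h4 : (0:ℝ) ≤ (p:ℝ) := Nat.cast_nonneg p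
    linarith
  positivity

lemma xiSL_rec (hm : 2 ≤ m) (n : ℕ) :
    ((n : ℝ) - p) * ((n : ℝ) + p + m - 2) * xiSL m p α β n
      + ∑ j ∈ Finset.range n, (α (n - j) * (j : ℝ) - β (n - j)) * xiSL m p α β j = 0 := by
  rcases lt_trichotomy n p with h | h | h
  · rw [xiSL_lt h, Finset.sum_eq_zero (fun j hj => by
      rw [xiSL_lt (lt_trans (Finset.mem_range.mp hj) h), mul_zero])]
    ring
  · subst h
    rw [xiSL_self, Finset.sum_eq_zero (fun j hj => by
      rw [xiSL_lt (Finset.mem_range.mp hj), mul_zero])]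
    ring
  · rw [xiSL_gt h]
    have hF := (FSL_pos hm h).ne'
    rw [← mul_assoc, mul_neg, mul_one_div_cancel hF]
    ring
end
section
variable {m p : ℕ} {α β : ℕ → ℝ}

lemma xiSL_rec' (hm : 2 ≤ m) (hα0 : α 0 = (m : ℝ) - 1)
    (hβ0 : β 0 = (p : ℝ) * ((p : ℝ) + (m : ℝ) - 2)) (n : ℕ) :
    (n : ℝ) * ((n : ℝ) - 1) * xiSL m p α β n
      + ∑ ij ∈ Finset.HasAntidiagonal.antidiagonal n,
          (α ij.1 * (ij.2 : ℝ) - β ij.1) * xiSL m p α β ij.2 = 0 := by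
  have key := xiSL_rec (m := m) (p := p) (α := α) (β := β) hm n
  rw [Finset.Nat.sum_antidiagonal_eq_sum_range_succ_mk
      (fun ij => (α ij.1 * (ij.2 : ℝ) - β ij.1) * xiSL m p α β ij.2) n]
  rw [Finset.sum_range_succ'
      (fun k => (α k * ((n - k : ℕ) : ℝ) - β k) * xiSL m p α β (n - k)) n]
  simp only [Nat.sub_zero]
  have hrefl : ∑ x ∈ Finset.range n,
      (α (x+1) * ((n - (x+1) : ℕ) : ℝ) - β (x+1)) * xiSL m p α β (n - (x+1))
      = ∑ j ∈ Finset.range n, (α (n - j) * (j : ℝ) - β (n - j)) * xiSL m p α β j := by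
    rw [← Finset.sum_range_reflect
        (fun j => (α (n - j) * (j : ℝ) - β (n - j)) * xiSL m p α β j) n]
    refine Finset.sum_congr rfl fun x hx => ?_
    have hx' := Finset.mem_range.mp hx
    have e1 : n - (n - 1 - x) = x + 1 := by omega
    have e2 : n - 1 - x = n - (x + 1) := by omega
    rw [e1, ← e2]
  rw [hrefl, hα0, hβ0]
  -- goal: n(n-1) ξ n + (range sum) + ((m-1) n - p(p+m-2)) ξ n = 0
  -- key : (n-p)(n+p+m-2) ξ n + range sum = 0
  nlinarith [key, sq_nonneg ((n:ℝ) - p)]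
end

section
variable {m p : ℕ} {α β : ℕ → ℝ}

lemma xiSL_majorant (hm : 2 ≤ m) {σ ρ C : ℝ} (hσ : 0 < σ) (hσρ : σ < ρ) (hC : 0 ≤ C)
    (hα : ∀ i, |α i| * ρ ^ i ≤ C) (hβ : ∀ i, |β i| * ρ ^ i ≤ C) :
    ∃ K : ℝ, 0 ≤ K ∧ ∀ n, |xiSL m p α β n| * σ ^ n ≤ K := by
  have hρ : 0 < ρ := hσ.trans hσρ
  set q : ℝ := σ / ρ with hq
  have hq0 : 0 < q := div_pos hσ hρ
  have hq1 : q < 1 := (div_lt_one hρ).mpr hσρ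
  obtain ⟨N₀, hN₀⟩ := exists_nat_ge (C * q / (1 - q))
  set N : ℕ := p + 1 + N₀ with hN
  set K : ℝ := ∑ n ∈ Finset.range N, |xiSL m p α β n| * σ ^ n with hK
  have hterm : ∀ n, 0 ≤ |xiSL m p α β n| * σ ^ n := fun n => by positivity
  have hK0 : 0 ≤ K := Finset.sum_nonneg fun n _ => hterm n
  refine ⟨K, hK0, fun n => ?_⟩
  induction n using Nat.strong_induction_on with
  | _ n ih =>
    rcases lt_or_ge n N with hn | hn
    · exact Finset.single_le_sum (fun j _ => hterm j) (Finset.mem_range.mpr hn)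
    · have hpn : p < n := by omega
      have hF := FSL_pos (p := p) hm hpn
      set F : ℝ := ((n : ℝ) - p) * ((n : ℝ) + p + m - 2) with hFdef
      rw [xiSL_gt hpn]
      set S : ℝ := ∑ j ∈ Finset.range n,
        (α (n - j) * (j : ℝ) - β (n - j)) * xiSL m p α β j with hS
      have habs : |(-(1 / F) * S)| = |S| / F := by
        rw [abs_mul, abs_neg, abs_div, abs_one, abs_of_pos hF, div_mul_eq_mul_div, one_mul]
      rw [habs, div_mul_eq_mul_div, div_le_iff₀ hF]
      have hSb : |S| * σ ^ n ≤ ∑ j ∈ Finset.range n, C * K * ((j:ℝ) + 1) * q ^ (n - j) := by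
        calc |S| * σ ^ n
            ≤ (∑ j ∈ Finset.range n,
                |(α (n - j) * (j : ℝ) - β (n - j)) * xiSL m p α β j|) * σ ^ n :=
              mul_le_mul_of_nonneg_right (Finset.abs_sum_le_sum_abs _ _) (by positivity)
          _ = ∑ j ∈ Finset.range n,
                |(α (n - j) * (j : ℝ) - β (n - j)) * xiSL m p α β j| * σ ^ n := by
              rw [Finset.sum_mul]
          _ ≤ ∑ j ∈ Finset.range n, C * K * ((j:ℝ) + 1) * q ^ (n - j) := by
              refine Finset.sum_le_sum fun j hj => ?_
              have hjn := Finset.mem_range.mp hj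
              have hαj : |α (n - j)| ≤ C / ρ ^ (n - j) := by
                rw [le_div_iff₀ (by positivity)]; exact hα (n - j)
              have hβj : |β (n - j)| ≤ C / ρ ^ (n - j) := by
                rw [le_div_iff₀ (by positivity)]; exact hβ (n - j)
              have h1 : |α (n - j) * (j : ℝ) - β (n - j)| ≤ C / ρ ^ (n - j) * ((j:ℝ) + 1) := by
                calc |α (n - j) * (j : ℝ) - β (n - j)|
                    ≤ |α (n - j) * (j : ℝ)| + |β (n - j)| := abs_sub _ _
                  _ = |α (n - j)| * (j:ℝ) + |β (n - j)| := by rw [abs_mul, Nat.abs_cast]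
                  _ ≤ C / ρ ^ (n - j) * (j:ℝ) + C / ρ ^ (n - j) :=
                      add_le_add (mul_le_mul_of_nonneg_right hαj (Nat.cast_nonneg j)) hβj
                  _ = C / ρ ^ (n - j) * ((j:ℝ) + 1) := by ring
              have h2 : |xiSL m p α β j| * σ ^ j ≤ K := ih j hjn
              have hsplit : σ ^ n = σ ^ j * σ ^ (n - j) := by
                rw [← pow_add]; congr 1; omega
              calc |(α (n - j) * (j : ℝ) - β (n - j)) * xiSL m p α β j| * σ ^ n
                  = |α (n - j) * (j : ℝ) - β (n - j)| * (|xiSL m p α β j| * σ ^ j) * σ ^ (n - j) := by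
                    rw [abs_mul, hsplit]; ring
                _ ≤ (C / ρ ^ (n - j) * ((j:ℝ) + 1)) * K * σ ^ (n - j) :=
                    mul_le_mul_of_nonneg_right
                      (mul_le_mul h1 h2 (by positivity) (by positivity))
                      (by positivity)
                _ = C * K * ((j:ℝ) + 1) * (σ ^ (n - j) / ρ ^ (n - j)) := by ring
                _ = C * K * ((j:ℝ) + 1) * q ^ (n - j) := by rw [← div_pow]
      have hgeom : ∑ j ∈ Finset.range n, q ^ (n - j) ≤ q / (1 - q) := by
        have hrefl : ∑ j ∈ Finset.range n, q ^ (n - j) = ∑ j ∈ Finset.range n, q ^ (j + 1) := by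
          rw [← Finset.sum_range_reflect (fun j => q ^ (j + 1)) n]
          refine Finset.sum_congr rfl fun x hx => ?_
          have := Finset.mem_range.mp hx
          congr 1; omega
        have hsum : ∑ j ∈ Finset.range n, q ^ (j + 1) = q * ∑ j ∈ Finset.range n, q ^ j := by
          rw [Finset.mul_sum]; exact Finset.sum_congr rfl fun x _ => by ring
        rw [hrefl, hsum, div_eq_mul_inv]
        refine mul_le_mul_of_nonneg_left ?_ hq0.le
        calc ∑ j ∈ Finset.range n, q ^ j ≤ ∑' j : ℕ, q ^ j :=
              Summable.sum_le_tsum _ (fun i _ => pow_nonneg hq0.le i)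
                (summable_geometric_of_lt_one hq0.le hq1)
          _ = (1 - q)⁻¹ := tsum_geometric_of_lt_one hq0.le hq1
      have hCK : 0 ≤ C * K := mul_nonneg hC hK0
      have hstep : ∑ j ∈ Finset.range n, C * K * ((j:ℝ) + 1) * q ^ (n - j)
          ≤ C * K * (n:ℝ) * (q / (1 - q)) := by
        calc ∑ j ∈ Finset.range n, C * K * ((j:ℝ) + 1) * q ^ (n - j)
            ≤ ∑ j ∈ Finset.range n, C * K * (n:ℝ) * q ^ (n - j) := by
              refine Finset.sum_le_sum fun j hj => ?_
              have hjn := Finset.mem_range.mp hj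
              have hj1 : ((j:ℝ) + 1) ≤ (n:ℝ) := by exact_mod_cast Nat.succ_le_of_lt hjn
              exact mul_le_mul_of_nonneg_right
                (mul_le_mul_of_nonneg_left hj1 hCK) (pow_nonneg hq0.le _)
          _ = C * K * (n:ℝ) * ∑ j ∈ Finset.range n, q ^ (n - j) := (Finset.mul_sum _ _ _).symm
          _ ≤ C * K * (n:ℝ) * (q / (1 - q)) :=
              mul_le_mul_of_nonneg_left hgeom
                (mul_nonneg hCK (Nat.cast_nonneg n))
      have hfinal : C * K * (n:ℝ) * (q / (1 - q)) ≤ K * F := by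
        have h1 : C * q / (1 - q) ≤ (n:ℝ) - p := by
          have h2 : (N₀ : ℝ) + p + 1 ≤ (n : ℝ) := by exact_mod_cast (by omega : N₀ + p + 1 ≤ n)
          linarith
        have hFn : ((n:ℝ) - p) * (n:ℝ) ≤ F := by
          have hm' : (2:ℝ) ≤ m := by exact_mod_cast hm
          have hp' : (0:ℝ) ≤ p := Nat.cast_nonneg p
          have hnp : (0:ℝ) < (n:ℝ) - p := by
            have : (p:ℝ) < n := by exact_mod_cast hpn
            linarith
          rw [hFdef]
          nlinarith
        calc C * K * (n:ℝ) * (q / (1 - q)) = K * ((C * q / (1 - q)) * (n:ℝ)) := by ring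
          _ ≤ K * (((n:ℝ) - p) * (n:ℝ)) :=
              mul_le_mul_of_nonneg_left
                (mul_le_mul_of_nonneg_right h1 (Nat.cast_nonneg n)) hK0
          _ ≤ K * F := mul_le_mul_of_nonneg_left hFn hK0
      linarith [hSb.trans (hstep.trans hfinal)]
end

lemma psSL_comp {c : ℕ → ℝ} {T s' y : ℝ} (hs' : 0 < s') (hy : |y| < s')
    (hc : ∀ n, |c n| * s' ^ n ≤ T) :
    Summable fun n : ℕ => ((n : ℝ) + 1) * |c (n + 1)| * |y| ^ n := by
  have hq0 : 0 ≤ |y| / s' := by positivity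
  have hq1 : |y| / s' < 1 := (div_lt_one hs').mpr hy
  have hT : 0 ≤ T := le_trans (by positivity) (hc 0)
  refine Summable.of_nonneg_of_le (fun n => by positivity)
    (fun n => ?_) (((summable_pow_mul_geometric_of_norm_lt_one 1
      (by rwa [Real.norm_eq_abs, abs_of_nonneg hq0])).add
      (summable_geometric_of_lt_one hq0 hq1)).mul_left (T / s'))
  have hcb : |c (n + 1)| ≤ T / s' ^ (n + 1) := by
    rw [le_div_iff₀ (by positivity)]; exact hc (n + 1)
  calc ((n : ℝ) + 1) * |c (n + 1)| * |y| ^ n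
      ≤ ((n : ℝ) + 1) * (T / s' ^ (n + 1)) * |y| ^ n := by
        refine mul_le_mul_of_nonneg_right (mul_le_mul_of_nonneg_left hcb (by positivity)) ?_
        positivity
    _ = T / s' * (((n:ℝ))^1 * (|y| / s') ^ n + (|y| / s') ^ n) := by
        rw [div_pow]
        field_simp
        ring

lemma bddSL {f : ℕ → ℝ} (h : Summable f) : ∃ C : ℝ, 0 ≤ C ∧ ∀ n, |f n| ≤ C := by
  have h0 : Filter.Tendsto (fun n => |f n|) Filter.atTop (nhds 0) := by
    simpa using h.tendsto_atTop_zero.abs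
  obtain ⟨C, hC⟩ := h0.bddAbove_range
  refine ⟨C, le_trans (abs_nonneg (f 0)) (hC ⟨0, rfl⟩), fun n => hC ⟨n, rfl⟩⟩

/-- summability of the derivative coefficient sequence inside the radius -/
lemma psSL_deriv_summable {c : ℕ → ℝ} {R : ℝ}
    (h : ∀ y : ℝ, |y| < R → Summable fun n => |c n| * |y| ^ n) :
    ∀ y : ℝ, |y| < R → Summable fun n : ℕ => |((n : ℝ) + 1) * c (n + 1)| * |y| ^ n := by
  intro y hy
  set s' : ℝ := (|y| + R) / 2 with hs'def
  have hys : |y| < s' := by simp only [hs'def]; linarith [abs_nonneg y]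
  have hs'R : s' < R := by simp only [hs'def]; linarith
  have hs' : 0 < s' := lt_of_le_of_lt (abs_nonneg y) hys
  have hsum : Summable fun n => |c n| * s' ^ n := by
    have := h s' (by rwa [abs_of_pos hs'])
    rwa [abs_of_pos hs'] at this
  obtain ⟨T, _, hT⟩ := bddSL hsum
  have hT' : ∀ n, |c n| * s' ^ n ≤ T := fun n => by
    have := hT n
    rwa [abs_of_nonneg (by positivity)] at this
  refine (psSL_comp hs' hys hT').congr fun n => ?_
  rw [abs_mul]
  congr 2
  rw [abs_of_nonneg (by positivity)]

lemma psSL_hasDerivAt {c : ℕ → ℝ} {R : ℝ}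
    (h : ∀ y : ℝ, |y| < R → Summable fun n => |c n| * |y| ^ n)
    {x : ℝ} (hx : |x| < R) :
    HasDerivAt (fun y : ℝ => ∑' n, c n * y ^ n)
      (∑' n : ℕ, ((n : ℝ) + 1) * c (n + 1) * x ^ n) x := by
  set s : ℝ := (|x| + R) / 2 with hsdef
  have hxs : |x| < s := by simp only [hsdef]; linarith [abs_nonneg x]
  have hsR : s < R := by simp only [hsdef]; linarith
  have hs : 0 < s := lt_of_le_of_lt (abs_nonneg x) hxs
  have hds := psSL_deriv_summable h s (by rwa [abs_of_pos hs])
  rw [abs_of_pos hs] at hds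
  set w : ℕ → ℝ := fun n => (n : ℝ) * |c n| * s ^ (n - 1) with hw
  have hwsum : Summable w := by
    rw [← summable_nat_add_iff 1]
    refine hds.congr fun n => ?_
    simp only [hw, Nat.add_sub_cancel, abs_mul]
    have : |(n : ℝ) + 1| = (n : ℝ) + 1 := abs_of_nonneg (by positivity)
    rw [this]
    push_cast
    ring
  have hball : x ∈ Metric.ball (0:ℝ) s := by
    rw [Metric.mem_ball, Real.dist_eq, sub_zero]; exact hxs
  have hbound : ∀ (n : ℕ) (y : ℝ), y ∈ Metric.ball (0:ℝ) s →
      ‖c n * ((n : ℝ) * y ^ (n - 1))‖ ≤ w n := by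
    intro n y hy
    rw [Metric.mem_ball, Real.dist_eq, sub_zero] at hy
    rw [Real.norm_eq_abs, abs_mul, abs_mul, Nat.abs_cast, abs_pow]
    calc |c n| * ((n:ℝ) * |y| ^ (n - 1)) ≤ |c n| * ((n:ℝ) * s ^ (n - 1)) := by
          refine mul_le_mul_of_nonneg_left (mul_le_mul_of_nonneg_left ?_ (Nat.cast_nonneg n))
            (abs_nonneg _)
          exact pow_le_pow_left₀ (abs_nonneg y) hy.le _
      _ = w n := by rw [hw]; ring
  have hsum0 : Summable fun n => c n * x ^ n := by
    refine Summable.of_abs ((h x hx).congr fun n => ?_)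
    rw [abs_mul, abs_pow]
  have key : HasDerivAt (fun y : ℝ => ∑' n, c n * y ^ n)
      (∑' n : ℕ, c n * ((n : ℝ) * x ^ (n - 1))) x :=
    hasDerivAt_tsum_of_isPreconnected hwsum Metric.isOpen_ball
      (convex_ball (0:ℝ) s).isPreconnected
      (fun n y _ => (hasDerivAt_pow n y).const_mul (c n)) hbound hball hsum0 hball
  have hsum1 : Summable fun n : ℕ => c n * ((n : ℝ) * x ^ (n - 1)) :=
    Summable.of_norm_bounded hwsum fun n => hbound n x hball
  have hval : ∑' n : ℕ, c n * ((n : ℝ) * x ^ (n - 1))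
      = ∑' n : ℕ, ((n : ℝ) + 1) * c (n + 1) * x ^ n := by
    rw [Summable.tsum_eq_zero_add hsum1]
    simp only [Nat.cast_zero, zero_mul, mul_zero, zero_add]
    refine tsum_congr fun n => ?_
    simp only [Nat.add_sub_cancel]
    push_cast
    ring
  rwa [hval] at key

lemma tsum_shift1SL {f : ℕ → ℝ} (h1 : Summable fun n => f (n + 1)) (h0 : f 0 = 0) :
    ∑' n, f n = ∑' n, f (n + 1) := by
  rw [Summable.tsum_eq_zero_add ((summable_nat_add_iff 1).mp h1), h0, zero_add]

lemma tsum_shift2SL {f : ℕ → ℝ} (h2 : Summable fun n => f (n + 2)) (h0 : f 0 = 0)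
    (h1 : f 1 = 0) : ∑' n, f n = ∑' n, f (n + 2) := by
  have hs : Summable f := (summable_nat_add_iff 2).mp h2
  have hs1 : Summable fun n => f (n + 1) := (summable_nat_add_iff 1).mpr hs
  rw [Summable.tsum_eq_zero_add hs, h0, zero_add, Summable.tsum_eq_zero_add hs1, h1, zero_add]

lemma geoSL {f : ℕ → ℝ} {σ K x : ℝ} (hσ : 0 < σ) (hb : ∀ n, |f n| * σ ^ n ≤ K)
    (hx : |x| < σ) : Summable fun n => |f n| * |x| ^ n := by
  have hq0 : (0:ℝ) ≤ |x| / σ := by positivity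
  have hq1 : |x| / σ < 1 := (div_lt_one hσ).mpr hx
  refine Summable.of_nonneg_of_le (fun n => by positivity) (fun n => ?_)
    ((summable_geometric_of_lt_one hq0 hq1).mul_left K)
  have he : |f n| * |x| ^ n = (|f n| * σ ^ n) * (|x| / σ) ^ n := by
    rw [div_pow]
    field_simp
  rw [he]
  exact mul_le_mul_of_nonneg_right (hb n) (by positivity)

theorem stmt_1 (m p : ℕ) (hm : 2 ≤ m) (R₀ : ℝ) (hR₀ : 0 < R₀)
    (α β : ℕ → ℝ)
    (hA : ∀ r ∈ Ico (0:ℝ) R₀, Summable (fun i => α i * r ^ i))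
    (hB : ∀ r ∈ Ico (0:ℝ) R₀, Summable (fun i => β i * r ^ i))
    (hα0 : α 0 = (m : ℝ) - 1) (hα1 : α 1 = 0)
    (hβ0 : β 0 = (p : ℝ) * ((p : ℝ) + (m : ℝ) - 2)) (hβ1 : β 1 = 0) :
    ∃ ξ : ℕ → ℝ, (∀ i < p, ξ i = 0) ∧ ξ p = 1 ∧
      (∀ r ∈ Ico (0:ℝ) R₀, Summable (fun i => ξ i * r ^ i)) ∧
      (∀ r ∈ Ioo (0:ℝ) R₀,
        r ^ 2 * deriv (deriv (fun x : ℝ => ∑' i, ξ i * x ^ i)) r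
          + (∑' i, α i * r ^ i) * r * deriv (fun x : ℝ => ∑' i, ξ i * x ^ i) r
          - (∑' i, β i * r ^ i) * (∑' i, ξ i * r ^ i) = 0) := by
  set ξ : ℕ → ℝ := xiSL m p α β with hξ
  have hξ0 : ∀ i < p, ξ i = 0 := fun i hi => xiSL_lt hi
  have hξp : ξ p = 1 := xiSL_self
  have hrec : ∀ n : ℕ, (n : ℝ) * ((n : ℝ) - 1) * ξ n
      + ∑ ij ∈ Finset.HasAntidiagonal.antidiagonal n, (α ij.1 * (ij.2 : ℝ) - β ij.1) * ξ ij.2 = 0 := by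
    rw [hξ]
    exact xiSL_rec' hm hα0 hβ0
  -- boundedness of the coefficients of A and B at each radius below R₀
  have hbound : ∀ ρ : ℝ, 0 < ρ → ρ < R₀ →
      ∃ C, 0 ≤ C ∧ (∀ i, |α i| * ρ ^ i ≤ C) ∧ (∀ i, |β i| * ρ ^ i ≤ C) := by
    intro ρ h0 h1
    obtain ⟨Ca, hCa0, hCa⟩ := bddSL (hA ρ ⟨h0.le, h1⟩)
    obtain ⟨Cb, hCb0, hCb⟩ := bddSL (hB ρ ⟨h0.le, h1⟩)
    refine ⟨max Ca Cb, le_trans hCa0 (le_max_left _ _), fun i => ?_, fun i => ?_⟩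
    · have h := hCa i
      rw [abs_mul, abs_pow, abs_of_pos h0] at h
      exact h.trans (le_max_left _ _)
    · have h := hCb i
      rw [abs_mul, abs_pow, abs_of_pos h0] at h
      exact h.trans (le_max_right _ _)
  have hPα : ∀ x : ℝ, |x| < R₀ → Summable fun n => |α n| * |x| ^ n := by
    intro x hx
    have hx0 := abs_nonneg x
    set ρ : ℝ := (|x| + R₀) / 2 with hρ
    have hρ0 : 0 < ρ := by simp only [hρ]; linarith
    have hρR : ρ < R₀ := by simp only [hρ]; linarith
    obtain ⟨C, _, hCα, _⟩ := hbound ρ hρ0 hρR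
    exact geoSL hρ0 hCα (by simp only [hρ]; linarith)
  have hPβ : ∀ x : ℝ, |x| < R₀ → Summable fun n => |β n| * |x| ^ n := by
    intro x hx
    have hx0 := abs_nonneg x
    set ρ : ℝ := (|x| + R₀) / 2 with hρ
    have hρ0 : 0 < ρ := by simp only [hρ]; linarith
    have hρR : ρ < R₀ := by simp only [hρ]; linarith
    obtain ⟨C, _, _, hCβ⟩ := hbound ρ hρ0 hρR
    exact geoSL hρ0 hCβ (by simp only [hρ]; linarith)
  have hPξ : ∀ x : ℝ, |x| < R₀ → Summable fun n => |ξ n| * |x| ^ n := by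
    intro x hx
    have hx0 := abs_nonneg x
    set σ : ℝ := (2 * |x| + R₀) / 3 with hσd
    set ρ : ℝ := (|x| + 2 * R₀) / 3 with hρd
    have hσ0 : 0 < σ := by simp only [hσd]; linarith
    have hσρ : σ < ρ := by simp only [hσd, hρd]; linarith
    have hρR : ρ < R₀ := by simp only [hρd]; linarith
    have hρ0 : 0 < ρ := hσ0.trans hσρ
    obtain ⟨C, hC0, hCα, hCβ⟩ := hbound ρ hρ0 hρR
    obtain ⟨K, hK0, hK⟩ := xiSL_majorant hm hσ0 hσρ hC0 hCα hCβ
    exact geoSL hσ0 hK (by simp only [hσd]; linarith)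
  clear_value ξ
  clear hξ
  have hP1 := psSL_deriv_summable hPξ
  have hP2 := psSL_deriv_summable hP1
  have absfact : ∀ (k : ℕ) (c : ℝ), |((k:ℝ) + 1) * c| = ((k:ℝ) + 1) * |c| := fun k c => by
    rw [abs_mul, abs_of_nonneg (by positivity : (0:ℝ) ≤ (k:ℝ) + 1)]
  refine ⟨ξ, hξ0, hξp, fun r hr => ?_, fun r hr => ?_⟩
  · -- summability on [0, R₀)
    have habs : |r| < R₀ := by rw [abs_of_nonneg hr.1]; exact hr.2
    exact Summable.of_abs ((hPξ r habs).congr fun n => by rw [abs_mul, abs_pow])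
  · -- the differential equation
    obtain ⟨hr0, hrR⟩ := hr
    have habs : |r| < R₀ := by rw [abs_of_pos hr0]; exact hrR
    -- derivatives
    have hd1 : ∀ y : ℝ, |y| < R₀ → HasDerivAt (fun x : ℝ => ∑' i, ξ i * x ^ i)
        (∑' n : ℕ, ((n:ℝ) + 1) * ξ (n + 1) * y ^ n) y := fun y hy => psSL_hasDerivAt hPξ hy
    have hderiv1 : deriv (fun x : ℝ => ∑' i, ξ i * x ^ i) r
        = ∑' n : ℕ, ((n:ℝ) + 1) * ξ (n + 1) * r ^ n := (hd1 r habs).deriv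
    have hEq : deriv (fun x : ℝ => ∑' i, ξ i * x ^ i) =ᶠ[nhds r]
        (fun y : ℝ => ∑' n : ℕ, ((n:ℝ) + 1) * ξ (n + 1) * y ^ n) := by
      filter_upwards [isOpen_Ioo.mem_nhds (show r ∈ Ioo (-R₀) R₀ from ⟨by linarith, hrR⟩)]
        with y hy
      exact (hd1 y (abs_lt.mpr ⟨hy.1, hy.2⟩)).deriv
    have hd2 := psSL_hasDerivAt (c := fun k : ℕ => ((k:ℝ) + 1) * ξ (k + 1)) hP1 habs
    have hderiv2 : deriv (deriv (fun x : ℝ => ∑' i, ξ i * x ^ i)) r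
        = ∑' n : ℕ, ((n:ℝ) + 1) * ((n:ℝ) + 2) * ξ (n + 2) * r ^ n := by
      rw [hEq.deriv_eq]
      exact hd2.deriv.trans (tsum_congr fun n => by push_cast; ring)
    -- summability facts at r
    have sc1 : Summable fun n : ℕ => ((n:ℝ) + 1) * ξ (n + 1) * r ^ n := by
      refine Summable.of_abs ((hP1 r habs).congr fun n => ?_)
      rw [← abs_pow, ← abs_mul]
    have sc2 : Summable fun n : ℕ => ((n:ℝ) + 1) * ((n:ℝ) + 2) * ξ (n + 2) * r ^ n := by
      refine Summable.of_abs ((hP2 r habs).congr fun n => ?_)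
      rw [← abs_pow, ← abs_mul]
      exact congrArg abs (by push_cast; ring)
    have snormα : Summable fun n : ℕ => ‖α n * r ^ n‖ :=
      (hPα r habs).congr fun n => by rw [Real.norm_eq_abs, abs_mul, abs_pow]
    have snormβ : Summable fun n : ℕ => ‖β n * r ^ n‖ :=
      (hPβ r habs).congr fun n => by rw [Real.norm_eq_abs, abs_mul, abs_pow]
    have snormξ : Summable fun n : ℕ => ‖ξ n * r ^ n‖ :=
      (hPξ r habs).congr fun n => by rw [Real.norm_eq_abs, abs_mul, abs_pow]
    have snormg : Summable fun n : ℕ => ‖(n:ℝ) * ξ n * r ^ n‖ := by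
      rw [← summable_nat_add_iff 1]
      refine ((hP1 r habs).mul_right |r|).congr fun n => ?_
      rw [Real.norm_eq_abs, ← abs_pow, ← abs_mul, ← abs_mul]
      exact congrArg abs (by push_cast; ring)
    -- shift identities
    have hT1sum : Summable fun n : ℕ => ((n:ℝ) + 1) * ξ (n + 1) * r ^ (n + 1) :=
      (sc1.mul_right r).congr fun n => by ring
    have hT1 : r * (∑' n : ℕ, ((n:ℝ) + 1) * ξ (n + 1) * r ^ n)
        = ∑' n : ℕ, (n:ℝ) * ξ n * r ^ n := by
      rw [← tsum_mul_left]
      refine Eq.symm ?_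
      refine (tsum_shift1SL (f := fun n : ℕ => (n:ℝ) * ξ n * r ^ n) ?_ (by simp)).trans ?_
      · refine hT1sum.congr fun n => ?_
        push_cast
        ring
      · exact tsum_congr fun n => by push_cast; ring
    have hT2sum : Summable fun n : ℕ => ((n:ℝ) + 1) * ((n:ℝ) + 2) * ξ (n + 2) * r ^ (n + 2) :=
      (sc2.mul_right (r ^ 2)).congr fun n => by ring
    have hT2 : r ^ 2 * (∑' n : ℕ, ((n:ℝ) + 1) * ((n:ℝ) + 2) * ξ (n + 2) * r ^ n)
        = ∑' n : ℕ, (n:ℝ) * ((n:ℝ) - 1) * ξ n * r ^ n := by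
      rw [← tsum_mul_left]
      refine Eq.symm ?_
      refine (tsum_shift2SL (f := fun n : ℕ => (n:ℝ) * ((n:ℝ) - 1) * ξ n * r ^ n)
        ?_ (by simp) (by simp)).trans ?_
      · refine hT2sum.congr fun n => ?_
        push_cast
        ring
      · exact tsum_congr fun n => by push_cast; ring
    -- Cauchy products
    have cauchyA : (∑' i, α i * r ^ i) * (∑' n : ℕ, (n:ℝ) * ξ n * r ^ n)
        = ∑' n : ℕ, ∑ kl ∈ Finset.HasAntidiagonal.antidiagonal n,
            (α kl.1 * r ^ kl.1) * ((kl.2:ℝ) * ξ kl.2 * r ^ kl.2) := by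
      have h1 := tsum_mul_tsum_eq_tsum_sum_antidiagonal_of_summable_norm snormα snormg
      exact h1
    have cauchyB : (∑' i, β i * r ^ i) * (∑' n : ℕ, ξ n * r ^ n)
        = ∑' n : ℕ, ∑ kl ∈ Finset.HasAntidiagonal.antidiagonal n,
            (β kl.1 * r ^ kl.1) * (ξ kl.2 * r ^ kl.2) := by
      have h1 := tsum_mul_tsum_eq_tsum_sum_antidiagonal_of_summable_norm snormβ snormξ
      exact h1
    have sCA : Summable fun n : ℕ => ∑ kl ∈ Finset.HasAntidiagonal.antidiagonal n,
        (α kl.1 * r ^ kl.1) * ((kl.2:ℝ) * ξ kl.2 * r ^ kl.2) := by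
      have h1 := summable_norm_sum_mul_antidiagonal_of_summable_norm snormα snormg
      exact h1.of_norm
    have sCB : Summable fun n : ℕ => ∑ kl ∈ Finset.HasAntidiagonal.antidiagonal n,
        (β kl.1 * r ^ kl.1) * (ξ kl.2 * r ^ kl.2) := by
      have h1 := summable_norm_sum_mul_antidiagonal_of_summable_norm snormβ snormξ
      exact h1.of_norm
    have sT2 : Summable fun n : ℕ => (n:ℝ) * ((n:ℝ) - 1) * ξ n * r ^ n := by
      rw [← summable_nat_add_iff 2]
      refine hT2sum.congr fun n => ?_
      push_cast
      ring
    have sT1 : Summable fun n : ℕ => (n:ℝ) * ξ n * r ^ n := snormg.of_norm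
    -- rewrite the goal
    rw [hderiv1, hderiv2, mul_assoc (∑' i, α i * r ^ i) r _, hT1, hT2, cauchyA, cauchyB,
      ← Summable.tsum_add sT2 sCA, ← Summable.tsum_sub (sT2.add sCA) sCB]
    have hzero : ∀ n : ℕ,
        (n:ℝ) * ((n:ℝ) - 1) * ξ n * r ^ n
          + (∑ kl ∈ Finset.HasAntidiagonal.antidiagonal n,
              (α kl.1 * r ^ kl.1) * ((kl.2:ℝ) * ξ kl.2 * r ^ kl.2))
          - (∑ kl ∈ Finset.HasAntidiagonal.antidiagonal n, (β kl.1 * r ^ kl.1) * (ξ kl.2 * r ^ kl.2)) = 0 := by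
      intro n
      have eca : ∑ kl ∈ Finset.HasAntidiagonal.antidiagonal n,
          (α kl.1 * r ^ kl.1) * ((kl.2:ℝ) * ξ kl.2 * r ^ kl.2)
          = (∑ kl ∈ Finset.HasAntidiagonal.antidiagonal n, α kl.1 * (kl.2:ℝ) * ξ kl.2) * r ^ n := by
        rw [Finset.sum_mul]
        refine Finset.sum_congr rfl fun kl hkl => ?_
        have hn := Finset.HasAntidiagonal.mem_antidiagonal.mp hkl
        calc (α kl.1 * r ^ kl.1) * ((kl.2:ℝ) * ξ kl.2 * r ^ kl.2)
            = α kl.1 * (kl.2:ℝ) * ξ kl.2 * (r ^ kl.1 * r ^ kl.2) := by ring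
          _ = α kl.1 * (kl.2:ℝ) * ξ kl.2 * r ^ n := by rw [← pow_add, hn]
      have ecb : ∑ kl ∈ Finset.HasAntidiagonal.antidiagonal n,
          (β kl.1 * r ^ kl.1) * (ξ kl.2 * r ^ kl.2)
          = (∑ kl ∈ Finset.HasAntidiagonal.antidiagonal n, β kl.1 * ξ kl.2) * r ^ n := by
        rw [Finset.sum_mul]
        refine Finset.sum_congr rfl fun kl hkl => ?_
        have hn := Finset.HasAntidiagonal.mem_antidiagonal.mp hkl
        calc (β kl.1 * r ^ kl.1) * (ξ kl.2 * r ^ kl.2)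
            = β kl.1 * ξ kl.2 * (r ^ kl.1 * r ^ kl.2) := by ring
          _ = β kl.1 * ξ kl.2 * r ^ n := by rw [← pow_add, hn]
      rw [eca, ecb]
      have key := hrec n
      have hsplit : ∑ kl ∈ Finset.HasAntidiagonal.antidiagonal n,
          (α kl.1 * (kl.2:ℝ) - β kl.1) * ξ kl.2
          = (∑ kl ∈ Finset.HasAntidiagonal.antidiagonal n, α kl.1 * (kl.2:ℝ) * ξ kl.2)
            - (∑ kl ∈ Finset.HasAntidiagonal.antidiagonal n, β kl.1 * ξ kl.2) := by
        rw [← Finset.sum_sub_distrib]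
        exact Finset.sum_congr rfl fun kl _ => by ring
      rw [hsplit] at key
      calc (n:ℝ) * ((n:ℝ) - 1) * ξ n * r ^ n
            + (∑ kl ∈ Finset.HasAntidiagonal.antidiagonal n, α kl.1 * (kl.2:ℝ) * ξ kl.2) * r ^ n
            - (∑ kl ∈ Finset.HasAntidiagonal.antidiagonal n, β kl.1 * ξ kl.2) * r ^ n
          = ((n:ℝ) * ((n:ℝ) - 1) * ξ n
              + ((∑ kl ∈ Finset.HasAntidiagonal.antidiagonal n, α kl.1 * (kl.2:ℝ) * ξ kl.2)
                - (∑ kl ∈ Finset.HasAntidiagonal.antidiagonal n, β kl.1 * ξ kl.2))) * r ^ n := by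
            ring
        _ = 0 * r ^ n := by rw [key]
        _ = 0 := zero_mul _
    calc ∑' n : ℕ, ((n:ℝ) * ((n:ℝ) - 1) * ξ n * r ^ n
            + (∑ kl ∈ Finset.HasAntidiagonal.antidiagonal n,
                (α kl.1 * r ^ kl.1) * ((kl.2:ℝ) * ξ kl.2 * r ^ kl.2))
            - (∑ kl ∈ Finset.HasAntidiagonal.antidiagonal n, (β kl.1 * r ^ kl.1) * (ξ kl.2 * r ^ kl.2)))
        = ∑' _ : ℕ, (0:ℝ) := tsum_congr hzero
      _ = 0 := tsum_zero
end

section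
/- Let m ≥ 2 be an integer and let θ : [0,∞) → ℝ be continuous with θ(0) = 0, θ(t) > 0 for t > 0, and θ continuously differentiable on (0,∞). Suppose that the function h(t) := θ'(t)/((m−1)θ(t)) is non-increasing on (0,∞). Define a(t) = (∫₀^t θ(s) ds)/θ(t) for t > 0. Then a is differentiable on (0,∞) with a'(t) = 1 − (m−1)h(t)a(t), and a'(t) > 0 for every t > 0; in particular a is strictly increasing on (0,∞). -/
open Set intervalIntegral

private lemma aux_key (m : ℕ) (hm : 2 ≤ m) (θ : ℝ → ℝ)
    (hθc : ContinuousOn θ (Set.Ici 0)) (hθ0 : θ 0 = 0)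
    (hθpos : ∀ t > (0:ℝ), 0 < θ t)
    (hθC1 : ContDiffOn ℝ 1 θ (Set.Ioi 0))
    (hmono : AntitoneOn (fun t => deriv θ t / (((m:ℝ) - 1) * θ t)) (Set.Ioi 0))
    {t : ℝ} (ht : 0 < t) :
    deriv θ t * (∫ s in (0:ℝ)..t, θ s) < θ t * θ t := by
  have hm1 : (0:ℝ) < (m:ℝ) - 1 := by
    have : (2:ℝ) ≤ (m:ℝ) := by exact_mod_cast hm
    linarith
  have hθt : 0 < θ t := hθpos t ht
  have hθcont : ∀ s, 0 < s → ContinuousAt θ s := fun s hs =>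
    (hθC1.continuousOn.continuousAt (isOpen_Ioi.mem_nhds hs))
  have hθdiff : ∀ s, 0 < s → HasDerivAt θ (deriv θ s) s := by
    intro s hs
    have := (hθC1.contDiffAt (isOpen_Ioi.mem_nhds hs)).differentiableAt one_ne_zero
    exact this.hasDerivAt
  -- interval integrability
  have hint : ∀ r ∈ Set.Ici (0:ℝ), IntervalIntegrable θ MeasureTheory.volume 0 r := by
    intro r hr
    apply ContinuousOn.intervalIntegrable
    apply hθc.mono
    rw [Set.uIcc_of_le hr]
    exact Set.Icc_subset_Ici_self
  set F : ℝ → ℝ := fun r => ∫ s in (0:ℝ)..r, θ s with hF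
  have hFcont : ContinuousOn F (Set.Icc 0 t) := by
    have := intervalIntegral.continuousOn_primitive_interval'
      (hint t ht.le) (by rw [Set.uIcc_of_le ht.le]; exact Set.left_mem_Icc.2 ht.le)
    rwa [Set.uIcc_of_le ht.le] at this
  have hFderiv : ∀ s, 0 < s → HasDerivAt F (θ s) s := by
    intro s hs
    exact intervalIntegral.integral_hasDerivAt_right (hint s hs.le)
      ((ContinuousOn.stronglyMeasurableAtFilter isOpen_Ioi hθC1.continuousOn) s hs)
      (hθcont s hs)
  have hF0 : F 0 = 0 := by simp [hF]
  -- comparison from antitonicity : for s ∈ Ioo 0 t, deriv θ t * θ s ≤ deriv θ s * θ t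
  have hcomp : ∀ s ∈ Set.Ioo (0:ℝ) t, deriv θ t * θ s ≤ deriv θ s * θ t := by
    intro s hs
    have h1 := hmono (Set.mem_Ioi.2 hs.1) (Set.mem_Ioi.2 ht) hs.2.le
    have hθs : 0 < θ s := hθpos s hs.1
    rw [div_le_div_iff₀ (by positivity) (by positivity)] at h1
    nlinarith
  -- φ monotone on [0,t]
  set φ : ℝ → ℝ := fun s => θ t * θ s - deriv θ t * F s with hφ
  have hφderiv : ∀ s ∈ Set.Ioo (0:ℝ) t,
      HasDerivAt φ (θ t * deriv θ s - deriv θ t * θ s) s := by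
    intro s hs
    exact ((hθdiff s hs.1).const_mul (θ t)).sub ((hFderiv s hs.1).const_mul (deriv θ t))
  have hφcont : ContinuousOn φ (Set.Icc 0 t) :=
    ((hθc.mono Set.Icc_subset_Ici_self).const_smul (θ t)).sub
      (hFcont.const_smul (deriv θ t))
  have hφmono : MonotoneOn φ (Set.Icc 0 t) := by
    apply monotoneOn_of_deriv_nonneg (convex_Icc 0 t) hφcont
    · intro s hs
      rw [interior_Icc] at hs
      exact (hφderiv s hs).differentiableAt.differentiableWithinAt
    · intro s hs
      rw [interior_Icc] at hs
      rw [(hφderiv s hs).deriv]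
      have := hcomp s hs
      linarith
  have hφ0 : φ 0 = 0 := by simp [hφ, hθ0, hF0]
  have hφt : 0 ≤ φ t := by
    have := hφmono (Set.left_mem_Icc.2 ht.le) (Set.right_mem_Icc.2 ht.le) ht.le
    rwa [hφ0] at this
  -- strictness
  rcases lt_or_eq_of_le hφt with h | h
  · have : 0 < θ t * θ t - deriv θ t * F t := h
    linarith
  · exfalso
    -- φ ≡ 0 on [0,t]
    have hφzero : ∀ s ∈ Set.Icc (0:ℝ) t, φ s = 0 := by
      intro s hs
      have h1 : φ 0 ≤ φ s := hφmono (Set.left_mem_Icc.2 ht.le) hs hs.1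
      have h2 : φ s ≤ φ t := hφmono hs (Set.right_mem_Icc.2 ht.le) hs.2
      rw [hφ0] at h1; rw [← h] at h2; linarith
    -- hence deriv θ s * θ t = deriv θ t * θ s on Ioo 0 t
    have hde : ∀ s ∈ Set.Ioo (0:ℝ) t, deriv θ s = (deriv θ t / θ t) * θ s := by
      intro s hs
      have hnhds : Set.Icc (0:ℝ) t ∈ nhds s := Icc_mem_nhds hs.1 hs.2
      have heq : φ =ᶠ[nhds s] (fun _ => (0:ℝ)) :=
        Filter.eventuallyEq_of_mem hnhds (fun x hx => hφzero x hx)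
      have h1 : HasDerivAt (fun _ : ℝ => (0:ℝ))
          (θ t * deriv θ s - deriv θ t * θ s) s :=
        (hφderiv s hs).congr_of_eventuallyEq heq.symm
      have h2 : θ t * deriv θ s - deriv θ t * θ s = 0 :=
        h1.unique (hasDerivAt_const s 0)
      field_simp
      linarith
    -- ψ s = θ s * exp (-c s) is constant on [0,t], but ψ 0 = 0 < ψ (t/2)
    set c : ℝ := deriv θ t / θ t with hc
    set ψ : ℝ → ℝ := fun s => θ s * Real.exp (-c * s) with hψ
    have hψderiv : ∀ s ∈ Set.Ioo (0:ℝ) t, HasDerivAt ψ 0 s := by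
      intro s hs
      have hlin : HasDerivAt (fun s : ℝ => -c * s) (-c) s := by
        simpa using (hasDerivAt_id s).const_mul (-c)
      have hexp : HasDerivAt (fun s : ℝ => Real.exp (-c * s))
          (Real.exp (-c * s) * (-c)) s := hlin.exp
      have := (hθdiff s hs.1).mul hexp
      refine HasDerivAt.congr_deriv this ?_
      rw [hde s hs]
      ring
    have hψcont : ContinuousOn ψ (Set.Icc 0 t) :=
      (hθc.mono Set.Icc_subset_Ici_self).mul
        ((Real.continuous_exp.comp (continuous_const.mul continuous_id)).continuousOn)
    have hψmono : MonotoneOn ψ (Set.Icc 0 t) := by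
      apply monotoneOn_of_deriv_nonneg (convex_Icc 0 t) hψcont
      · intro s hs; rw [interior_Icc] at hs
        exact (hψderiv s hs).differentiableAt.differentiableWithinAt
      · intro s hs; rw [interior_Icc] at hs
        rw [(hψderiv s hs).deriv]
    have hψanti : AntitoneOn ψ (Set.Icc 0 t) := by
      apply antitoneOn_of_deriv_nonpos (convex_Icc 0 t) hψcont
      · intro s hs; rw [interior_Icc] at hs
        exact (hψderiv s hs).differentiableAt.differentiableWithinAt
      · intro s hs; rw [interior_Icc] at hs
        rw [(hψderiv s hs).deriv]
    have h0mem : (0:ℝ) ∈ Set.Icc (0:ℝ) t := Set.left_mem_Icc.2 ht.le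
    have hhalf : t/2 ∈ Set.Icc (0:ℝ) t := ⟨by linarith, by linarith⟩
    have e1 : ψ 0 ≤ ψ (t/2) := hψmono h0mem hhalf (by linarith)
    have e2 : ψ (t/2) ≤ ψ 0 := hψanti h0mem hhalf (by linarith)
    have : ψ (t/2) = ψ 0 := le_antisymm e2 e1
    have hψ0 : ψ 0 = 0 := by simp [hψ, hθ0]
    have hψhalf : 0 < ψ (t/2) := by
      have := hθpos (t/2) (by linarith)
      positivity
    rw [this, hψ0] at hψhalf
    exact lt_irrefl 0 hψhalf

theorem stmt_3 (m : ℕ) (hm : 2 ≤ m) (θ : ℝ → ℝ)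
    (hθc : ContinuousOn θ (Set.Ici 0)) (hθ0 : θ 0 = 0)
    (hθpos : ∀ t > (0:ℝ), 0 < θ t)
    (hθC1 : ContDiffOn ℝ 1 θ (Set.Ioi 0))
    (hmono : AntitoneOn (fun t => deriv θ t / (((m:ℝ) - 1) * θ t)) (Set.Ioi 0)) :
    (∀ t > (0:ℝ),
      HasDerivAt (fun r => (∫ s in (0:ℝ)..r, θ s) / θ r)
        (1 - ((m:ℝ) - 1) * (deriv θ t / (((m:ℝ) - 1) * θ t))
          * ((∫ s in (0:ℝ)..t, θ s) / θ t)) t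
      ∧ 0 < 1 - ((m:ℝ) - 1) * (deriv θ t / (((m:ℝ) - 1) * θ t))
          * ((∫ s in (0:ℝ)..t, θ s) / θ t))
    ∧ StrictMonoOn (fun r => (∫ s in (0:ℝ)..r, θ s) / θ r) (Set.Ioi 0) := by
  have hm1 : (0:ℝ) < (m:ℝ) - 1 := by
    have : (2:ℝ) ≤ (m:ℝ) := by exact_mod_cast hm
    linarith
  have hmain : ∀ t > (0:ℝ),
      HasDerivAt (fun r => (∫ s in (0:ℝ)..r, θ s) / θ r)
        (1 - ((m:ℝ) - 1) * (deriv θ t / (((m:ℝ) - 1) * θ t))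
          * ((∫ s in (0:ℝ)..t, θ s) / θ t)) t
      ∧ 0 < 1 - ((m:ℝ) - 1) * (deriv θ t / (((m:ℝ) - 1) * θ t))
          * ((∫ s in (0:ℝ)..t, θ s) / θ t) := by
    intro t ht
    have hθt : 0 < θ t := hθpos t ht
    have hθcont : ContinuousAt θ t :=
      hθC1.continuousOn.continuousAt (isOpen_Ioi.mem_nhds ht)
    have hθdiff : HasDerivAt θ (deriv θ t) t :=
      ((hθC1.contDiffAt (isOpen_Ioi.mem_nhds ht)).differentiableAt one_ne_zero).hasDerivAt
    have hint : IntervalIntegrable θ MeasureTheory.volume 0 t := by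
      apply ContinuousOn.intervalIntegrable
      apply hθc.mono
      rw [Set.uIcc_of_le ht.le]
      exact Set.Icc_subset_Ici_self
    have hFderiv : HasDerivAt (fun r => ∫ s in (0:ℝ)..r, θ s) (θ t) t :=
      intervalIntegral.integral_hasDerivAt_right hint
        ((ContinuousOn.stronglyMeasurableAtFilter isOpen_Ioi hθC1.continuousOn) t ht)
        hθcont
    have hquot := hFderiv.div hθdiff hθt.ne'
    have hkey := aux_key m hm θ hθc hθ0 hθpos hθC1 hmono ht
    constructor
    · refine HasDerivAt.congr_deriv hquot ?_
      field_simp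
    · have h2 : 1 - ((m:ℝ) - 1) * (deriv θ t / (((m:ℝ) - 1) * θ t))
          * ((∫ s in (0:ℝ)..t, θ s) / θ t)
          = (θ t * θ t - deriv θ t * (∫ s in (0:ℝ)..t, θ s)) / (θ t * θ t) := by
        field_simp
      rw [h2]
      apply div_pos (by linarith) (by positivity)
  refine ⟨hmain, ?_⟩
  apply strictMonoOn_of_deriv_pos (convex_Ioi 0)
  · intro x hx
    exact ((hmain x hx).1.continuousAt).continuousWithinAt
  · intro x hx
    rw [interior_Ioi] at hx
    rw [(hmain x hx).1.deriv]
    exact (hmain x hx).2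
end

section
/- Let m ≥ 2 be an integer, let h : (0,∞) → ℝ be differentiable with h'(t) < 0 for all t > 0, and let a : (0,∞) → (0,∞) be differentiable with a'(t) = 1 − (m−1)h(t)a(t) for all t > 0. Then the function G := a + a·a' is differentiable with G'(t) = 2a'(t)² − (m−1)h'(t)a(t)² > 0 for all t > 0; in particular G is strictly increasing on (0,∞). -/
theorem stmt_4 (m : ℕ) (hm : 2 ≤ m) (h h' a : ℝ → ℝ)
    (hh : ∀ t > (0:ℝ), HasDerivAt h (h' t) t)
    (hh'neg : ∀ t > (0:ℝ), h' t < 0)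
    (hapos : ∀ t > (0:ℝ), 0 < a t)
    (ha : ∀ t > (0:ℝ), HasDerivAt a (1 - ((m:ℝ) - 1) * h t * a t) t) :
    (∀ t > (0:ℝ),
      HasDerivAt (fun s => a s + a s * deriv a s)
        (2 * (deriv a t) ^ 2 - ((m:ℝ) - 1) * h' t * (a t) ^ 2) t
      ∧ 0 < 2 * (deriv a t) ^ 2 - ((m:ℝ) - 1) * h' t * (a t) ^ 2)
    ∧ StrictMonoOn (fun s => a s + a s * deriv a s) (Set.Ioi 0) := by
  have hm1 : (1:ℝ) ≤ (m:ℝ) - 1 := by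
    have : (2:ℝ) ≤ (m:ℝ) := by exact_mod_cast hm
    linarith
  have key : ∀ t > (0:ℝ), HasDerivAt (fun s => a s + a s * deriv a s)
      (2 * (deriv a t) ^ 2 - ((m:ℝ) - 1) * h' t * (a t) ^ 2) t := by
    intro t ht
    have hda : deriv a t = 1 - ((m:ℝ) - 1) * h t * a t := (ha t ht).deriv
    have heq : (fun s => a s + a s * (1 - ((m:ℝ) - 1) * h s * a s))
        =ᶠ[nhds t] (fun s => a s + a s * deriv a s) := by
      filter_upwards [Ioi_mem_nhds ht] with s hs
      rw [(ha s hs).deriv]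
    have h1 := ha t ht
    have h2 := hh t ht
    have hG : HasDerivAt (fun s => a s + a s * (1 - ((m:ℝ) - 1) * h s * a s))
        (2 * (deriv a t) ^ 2 - ((m:ℝ) - 1) * h' t * (a t) ^ 2) t := by
      have := h1.add (h1.mul ((hasDerivAt_const t (1:ℝ)).sub
        (((hasDerivAt_const t ((m:ℝ) - 1)).mul h2).mul h1)))
      refine this.congr_deriv ?_
      rw [hda]; simp only [Pi.sub_apply, Pi.mul_apply]; ring
    exact hG.congr_of_eventuallyEq heq.symm
  have pos : ∀ t > (0:ℝ), 0 < 2 * (deriv a t) ^ 2 - ((m:ℝ) - 1) * h' t * (a t) ^ 2 := by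
    intro t ht
    nlinarith [sq_nonneg (deriv a t), mul_pos (neg_pos.mpr (hh'neg t ht)) (pow_pos (hapos t ht) 2)]
  refine ⟨fun t ht => ⟨key t ht, pos t ht⟩, ?_⟩
  apply strictMonoOn_of_deriv_pos (convex_Ioi 0)
  · intro x hx
    exact (key x hx).continuousAt.continuousWithinAt
  · intro x hx
    rw [interior_Ioi] at hx
    rw [(key x hx).deriv]
    exact pos x hx
end

section
/- Let m ≥ 2 be an integer, let h : (0,∞) → (0,∞) be twice differentiable with h(t)h''(t) ≥ 2h'(t)² for all t > 0, and let a : (0,∞) → ℝ be differentiable with a'(t) = 1 − (m−1)h(t)a(t) for all t > 0. Then the function H := (a')² − (m−1)h'·a² is non-increasing on (0,∞). -/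
theorem stmt_5 (m : ℕ) (hm : 2 ≤ m) (h h' h'' a : ℝ → ℝ)
    (hhpos : ∀ t > (0:ℝ), 0 < h t)
    (hd1 : ∀ t > (0:ℝ), HasDerivAt h (h' t) t)
    (hd2 : ∀ t > (0:ℝ), HasDerivAt h' (h'' t) t)
    (hineq : ∀ t > (0:ℝ), 2 * (h' t) ^ 2 ≤ h t * h'' t)
    (ha : ∀ t > (0:ℝ), HasDerivAt a (1 - ((m:ℝ) - 1) * h t * a t) t) :
    AntitoneOn
      (fun t => (1 - ((m:ℝ) - 1) * h t * a t) ^ 2 - ((m:ℝ) - 1) * h' t * (a t) ^ 2)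
      (Set.Ioi 0) := by
  set c : ℝ := (m:ℝ) - 1 with hc
  have hc1 : (1:ℝ) ≤ c := by
    have : (2:ℝ) ≤ (m:ℝ) := by exact_mod_cast hm
    simp [hc]; linarith
  have hc0 : (0:ℝ) ≤ c := by linarith
  have key : ∀ t ∈ Set.Ioi (0:ℝ),
      HasDerivAt (fun t => (1 - c * h t * a t) ^ 2 - c * h' t * (a t) ^ 2)
        (2 * (1 - c * h t * a t) * (-(c * (h' t * a t + h t * (1 - c * h t * a t))))
          - c * (h'' t * (a t) ^ 2 + h' t * (2 * a t * (1 - c * h t * a t)))) t := by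
    intro t ht
    have ht0 : (0:ℝ) < t := ht
    have Hh := hd1 t ht0
    have Hh' := hd2 t ht0
    have Ha := ha t ht0
    have H1 : HasDerivAt (fun t => 1 - c * h t * a t)
        (-(c * (h' t * a t + h t * (1 - c * h t * a t)))) t := by
      have := ((Hh.const_mul c).mul Ha).const_sub 1
      exact this.congr_deriv (by ring)
    have H2 : HasDerivAt (fun t => (1 - c * h t * a t) ^ 2)
        (2 * (1 - c * h t * a t) * (-(c * (h' t * a t + h t * (1 - c * h t * a t))))) t := by
      have := H1.pow 2
      exact this.congr_deriv (by ring)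
    have H3 : HasDerivAt (fun t => c * h' t * (a t) ^ 2)
        (c * (h'' t * (a t) ^ 2 + h' t * (2 * a t * (1 - c * h t * a t)))) t := by
      have := (Hh'.const_mul c).mul (Ha.pow 2)
      exact this.congr_deriv (by simp only [Pi.pow_apply]; ring)
    exact H2.sub H3
  have hiio : interior (Set.Ioi (0:ℝ)) = Set.Ioi 0 := isOpen_Ioi.interior_eq
  apply antitoneOn_of_deriv_nonpos (convex_Ioi 0)
  · intro t ht
    exact (key t ht).continuousAt.continuousWithinAt
  · rw [hiio]
    intro t ht
    exact (key t ht).differentiableAt.differentiableWithinAt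
  · rw [hiio]
    intro t ht
    rw [(key t ht).deriv]
    have hp := hhpos t ht
    have hi := hineq t ht
    set A := a t
    set B := 1 - c * h t * A
    have h1 : 0 ≤ 2 * h t * B ^ 2 + 4 * h' t * A * B + h'' t * A ^ 2 := by
      have hsq : 0 ≤ (h t * B + h' t * A) ^ 2 := sq_nonneg _
      have hmul : 2 * (h' t) ^ 2 * A ^ 2 ≤ h t * h'' t * A ^ 2 := by
        nlinarith [sq_nonneg A]
      nlinarith [hp, hsq, hmul]
    nlinarith [mul_nonneg hc0 h1]
end

section
/- Let k ∈ [0,1] and define h : (0,∞) → ℝ by h(r) = coth(r) + k·tanh(r). Then for every r > 0 one has h(r)·h''(r) ≥ 2·(1/sinh(r)² + k/cosh(r)²)² ≥ 2·h'(r)². -/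
lemma hD (k x : ℝ) (hx : Real.sinh x ≠ 0) :
    HasDerivAt (fun s => Real.cosh s / Real.sinh s + k * Real.tanh s)
      (k / Real.cosh x ^ 2 - 1 / Real.sinh x ^ 2) x := by
  have hc : Real.cosh x ≠ 0 := (Real.cosh_pos x).ne'
  have h1 : HasDerivAt (fun s => Real.cosh s / Real.sinh s)
      ((Real.sinh x * Real.sinh x - Real.cosh x * Real.cosh x) / Real.sinh x ^ 2) x :=
    (Real.hasDerivAt_cosh x).div (Real.hasDerivAt_sinh x) hx
  have h2 : HasDerivAt (fun s => k * (Real.sinh s / Real.cosh s))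
      (k * ((Real.cosh x * Real.cosh x - Real.sinh x * Real.sinh x) / Real.cosh x ^ 2)) x :=
    ((Real.hasDerivAt_sinh x).div (Real.hasDerivAt_cosh x) hc).const_mul k
  have h3 : HasDerivAt (fun s => Real.cosh s / Real.sinh s + k * (Real.sinh s / Real.cosh s)) _ x := h1.add h2
  have he : (fun s => Real.cosh s / Real.sinh s + k * (Real.sinh s / Real.cosh s))
      = fun s => Real.cosh s / Real.sinh s + k * Real.tanh s := by
    funext s; rw [Real.tanh_eq_sinh_div_cosh]
  rw [he] at h3
  convert h3 using 1
  have e1 : Real.cosh x * Real.cosh x - Real.sinh x * Real.sinh x = 1 := by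
    nlinarith [Real.cosh_sq_sub_sinh_sq x]
  rw [e1, show Real.sinh x * Real.sinh x - Real.cosh x * Real.cosh x = -1 by linarith]
  ring

lemma gD (k x : ℝ) (hx : Real.sinh x ≠ 0) :
    HasDerivAt (fun s => k / Real.cosh s ^ 2 - 1 / Real.sinh s ^ 2)
      (2 * Real.cosh x / Real.sinh x ^ 3 - 2 * k * Real.sinh x / Real.cosh x ^ 3) x := by
  have hc : Real.cosh x ≠ 0 := (Real.cosh_pos x).ne'
  have hc2 : Real.cosh x ^ 2 ≠ 0 := pow_ne_zero 2 hc
  have hs2 : Real.sinh x ^ 2 ≠ 0 := pow_ne_zero 2 hx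
  have d1 : HasDerivAt (fun s => Real.cosh s ^ 2) (2 * Real.cosh x ^ 1 * Real.sinh x) x :=
    (Real.hasDerivAt_cosh x).pow 2
  have d2 : HasDerivAt (fun s => Real.sinh s ^ 2) (2 * Real.sinh x ^ 1 * Real.cosh x) x :=
    (Real.hasDerivAt_sinh x).pow 2
  have d3 : HasDerivAt (fun s => k / Real.cosh s ^ 2)
      ((0 * Real.cosh x ^ 2 - k * (2 * Real.cosh x ^ 1 * Real.sinh x)) / (Real.cosh x ^ 2) ^ 2) x :=
    (hasDerivAt_const x k).div d1 hc2
  have d4 : HasDerivAt (fun s => 1 / Real.sinh s ^ 2)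
      ((0 * Real.sinh x ^ 2 - 1 * (2 * Real.sinh x ^ 1 * Real.cosh x)) / (Real.sinh x ^ 2) ^ 2) x :=
    (hasDerivAt_const x (1:ℝ)).div d2 hs2
  have h : HasDerivAt (fun s => k / Real.cosh s ^ 2 - 1 / Real.sinh s ^ 2) _ x := d3.sub d4
  convert h using 1
  field_simp
  ring

theorem stmt_6 (k : ℝ) (hk : k ∈ Set.Icc (0:ℝ) 1) :
    ∀ r > (0:ℝ),
      2 * (deriv (fun s => Real.cosh s / Real.sinh s + k * Real.tanh s) r) ^ 2
        ≤ 2 * (1 / Real.sinh r ^ 2 + k / Real.cosh r ^ 2) ^ 2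
      ∧ 2 * (1 / Real.sinh r ^ 2 + k / Real.cosh r ^ 2) ^ 2
        ≤ (Real.cosh r / Real.sinh r + k * Real.tanh r)
          * deriv (deriv (fun s => Real.cosh s / Real.sinh s + k * Real.tanh s)) r := by
  obtain ⟨hk0, hk1⟩ := hk
  intro r hr
  have hs : 0 < Real.sinh r := Real.sinh_pos_iff.2 hr
  have hc : 0 < Real.cosh r := Real.cosh_pos r
  have hd1 : deriv (fun s => Real.cosh s / Real.sinh s + k * Real.tanh s) r
      = k / Real.cosh r ^ 2 - 1 / Real.sinh r ^ 2 := (hD k r hs.ne').deriv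
  have hev : deriv (fun s => Real.cosh s / Real.sinh s + k * Real.tanh s)
      =ᶠ[nhds r] (fun s => k / Real.cosh s ^ 2 - 1 / Real.sinh s ^ 2) := by
    filter_upwards [eventually_gt_nhds hr] with x hx
    exact (hD k x (Real.sinh_pos_iff.2 hx).ne').deriv
  have hd2 : deriv (deriv (fun s => Real.cosh s / Real.sinh s + k * Real.tanh s)) r
      = 2 * Real.cosh r / Real.sinh r ^ 3 - 2 * k * Real.sinh r / Real.cosh r ^ 3 := by
    rw [hev.deriv_eq]
    exact (gD k r hs.ne').deriv
  have hcs : Real.cosh r ^ 2 = 1 + Real.sinh r ^ 2 := by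
    nlinarith [Real.cosh_sq_sub_sinh_sq r]
  have ha : (0:ℝ) < 1 / Real.sinh r ^ 2 := by positivity
  have hb : (0:ℝ) ≤ k / Real.cosh r ^ 2 := by positivity
  constructor
  · rw [hd1]
    nlinarith [ha, hb, mul_nonneg ha.le hb]
  · rw [hd2, Real.tanh_eq_sinh_div_cosh]
    set s := Real.sinh r
    set c := Real.cosh r
    have e1 : 2 * (1 / s ^ 2 + k / c ^ 2) ^ 2
        = (2 * (c ^ 2 + k * s ^ 2) ^ 2) / (s ^ 4 * c ^ 4) := by
      field_simp
    have e2 : (c / s + k * (s / c)) * (2 * c / s ^ 3 - 2 * k * s / c ^ 3)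
        = (2 * (c ^ 2 + k * s ^ 2) * (c ^ 4 - k * s ^ 4)) / (s ^ 4 * c ^ 4) := by
      field_simp
    rw [e1, e2]
    apply div_le_div_of_nonneg_right ?_ (by positivity)
    nlinarith [mul_nonneg (mul_nonneg (sub_nonneg.2 hk1) (sq_nonneg s)) (sq_nonneg c),
      sq_nonneg s, sq_nonneg c, mul_nonneg hk0 (sq_nonneg s)]
end

section
/- Let m ≥ 2 be an integer and let v : (0,∞) → (0,∞) be twice differentiable with v'(r) > 0 for all r > 0 and v''(r) = (m−1)h(r)v'(r), where h : (0,∞) → ℝ satisfies h(r) → h₀ as r → ∞ for some h₀ ≥ 0. Then ln(v(r))/r → (m−1)h₀ as r → ∞. -/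
open Filter Set Real

private lemma monoAux {f f' : ℝ → ℝ} {D : Set ℝ} (hD : Convex ℝ D)
    (hf : ∀ x ∈ D, HasDerivAt f (f' x) x)
    (h0 : ∀ x ∈ interior D, 0 ≤ f' x) : MonotoneOn f D :=
  monotoneOn_of_hasDerivWithinAt_nonneg hD
    (fun x hx => (hf x hx).continuousAt.continuousWithinAt)
    (fun x hx => (hf x (interior_subset hx)).hasDerivWithinAt) h0

private lemma antiAux {f f' : ℝ → ℝ} {D : Set ℝ} (hD : Convex ℝ D)
    (hf : ∀ x ∈ D, HasDerivAt f (f' x) x)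
    (h0 : ∀ x ∈ interior D, f' x ≤ 0) : AntitoneOn f D :=
  antitoneOn_of_hasDerivWithinAt_nonpos hD
    (fun x hx => (hf x hx).continuousAt.continuousWithinAt)
    (fun x hx => (hf x (interior_subset hx)).hasDerivWithinAt) h0

private lemma expDeriv (c x : ℝ) :
    HasDerivAt (fun y => Real.exp (c * y)) (c * Real.exp (c * x)) x := by
  simpa [mul_comm] using ((hasDerivAt_id x).const_mul c).exp

set_option maxHeartbeats 2000000 in
theorem stmt_9 (m : ℕ) (hm : 2 ≤ m) (v v' v'' h : ℝ → ℝ) (h₀ : ℝ)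
    (hvpos : ∀ r > (0:ℝ), 0 < v r)
    (hv'pos : ∀ r > (0:ℝ), 0 < v' r)
    (hv : ∀ r > (0:ℝ), HasDerivAt v (v' r) r)
    (hv' : ∀ r > (0:ℝ), HasDerivAt v' (v'' r) r)
    (hode : ∀ r > (0:ℝ), v'' r = ((m:ℝ) - 1) * h r * v' r)
    (hlim : Filter.Tendsto h Filter.atTop (nhds h₀))
    (hh₀ : 0 ≤ h₀) :
    Filter.Tendsto (fun r => Real.log (v r) / r) Filter.atTop
      (nhds (((m:ℝ) - 1) * h₀)) := by
  set L : ℝ := ((m:ℝ) - 1) * h₀ with hLdef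
  have hm1 : (1:ℝ) ≤ (m:ℝ) - 1 := by
    have : (2:ℝ) ≤ (m:ℝ) := by exact_mod_cast hm
    linarith
  have hLnn : 0 ≤ L := mul_nonneg (by linarith) hh₀
  have key : ∀ ε > (0:ℝ), ∀ᶠ r in atTop, |Real.log (v r) / r - L| ≤ ε := by
    intro ε hε
    set δ : ℝ := ε / 4 with hδdef
    have hδ : 0 < δ := by positivity
    have hev : ∀ᶠ s in atTop, v'' s ≤ (L + δ) * v' s ∧ (L - δ) * v' s ≤ v'' s := by
      have hev1 : ∀ᶠ s in atTop, |h s - h₀| ≤ δ / ((m:ℝ) - 1) := by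
        filter_upwards [Metric.tendsto_nhds.mp hlim (δ / ((m:ℝ) - 1)) (by positivity)]
          with s hs
        rw [Real.dist_eq] at hs; exact hs.le
      filter_upwards [hev1, eventually_gt_atTop (0:ℝ)] with s hs hs0
      have hvp := hv'pos s hs0
      have habs := abs_le.mp hs
      have hmne : ((m:ℝ) - 1) ≠ 0 := by linarith
      have h1 : ((m:ℝ) - 1) * (h s - h₀) ≤ δ := by
        have := mul_le_mul_of_nonneg_left habs.2 (by linarith : (0:ℝ) ≤ (m:ℝ) - 1)
        rw [mul_div_cancel₀ _ hmne] at this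
        linarith
      have h2 : -δ ≤ ((m:ℝ) - 1) * (h s - h₀) := by
        have := mul_le_mul_of_nonneg_left habs.1 (by linarith : (0:ℝ) ≤ (m:ℝ) - 1)
        rw [mul_neg, mul_div_cancel₀ _ hmne] at this
        linarith
      have hodes : v'' s - L * v' s = (((m:ℝ) - 1) * (h s - h₀)) * v' s := by
        rw [hode s hs0, hLdef]; ring
      constructor
      · nlinarith [mul_le_mul_of_nonneg_right h1 hvp.le]
      · nlinarith [mul_le_mul_of_nonneg_right h2 hvp.le]
    obtain ⟨R₀, hR₀⟩ := hev.exists_forall_of_atTop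
    set R : ℝ := max R₀ 1 with hRdef
    have hR1 : (1:ℝ) ≤ R := le_max_right _ _
    have hR0 : (0:ℝ) < R := by linarith
    have hode' : ∀ s ∈ Ici R, v'' s ≤ (L + δ) * v' s ∧ (L - δ) * v' s ≤ v'' s :=
      fun s hs => hR₀ s (le_trans (le_max_left _ _) hs)
    have hpos : ∀ s ∈ Ici R, (0:ℝ) < s := fun s hs => lt_of_lt_of_le hR0 hs
    have hderiv : ∀ (c : ℝ), ∀ x ∈ Ici R,
        HasDerivAt (fun y => v' y * Real.exp (c * y))
          ((v'' x + c * v' x) * Real.exp (c * x)) x := by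
      intro c x hx
      have := (hv' x (hpos x hx)).mul (expDeriv c x)
      exact this.congr_deriv (by ring)
    -- upper bound on v'
    set C₁ : ℝ := v' R * Real.exp (-(L + δ) * R) with hC₁def
    have hC₁pos : 0 < C₁ := mul_pos (hv'pos R hR0) (Real.exp_pos _)
    have hup' : ∀ s ∈ Ici R, v' s ≤ C₁ * Real.exp ((L + δ) * s) := by
      have hanti : AntitoneOn (fun y => v' y * Real.exp (-(L + δ) * y)) (Ici R) := by
        refine antiAux (convex_Ici R) (hderiv (-(L + δ))) ?_
        intro x hx
        rw [interior_Ici] at hx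
        have h1 := (hode' x (mem_Ici.mpr (mem_Ioi.mp hx).le)).1
        have he : (0:ℝ) < Real.exp (-(L + δ) * x) := Real.exp_pos _
        have h2 : v'' x + -(L + δ) * v' x ≤ 0 := by linarith
        exact mul_nonpos_of_nonpos_of_nonneg h2 he.le
      intro s hs
      have hle := hanti self_mem_Ici hs hs
      rw [hC₁def]
      calc v' s = (v' s * Real.exp (-(L + δ) * s)) * Real.exp ((L + δ) * s) := by
            rw [mul_assoc, ← Real.exp_add, show -(L + δ) * s + (L + δ) * s = 0 by ring,
              Real.exp_zero, mul_one]
        _ ≤ (v' R * Real.exp (-(L + δ) * R)) * Real.exp ((L + δ) * s) :=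
            mul_le_mul_of_nonneg_right hle (Real.exp_pos _).le
    -- lower bound on v'
    set C₂ : ℝ := v' R * Real.exp (-(L - δ) * R) with hC₂def
    have hC₂pos : 0 < C₂ := mul_pos (hv'pos R hR0) (Real.exp_pos _)
    have hlo' : ∀ s ∈ Ici R, C₂ * Real.exp ((L - δ) * s) ≤ v' s := by
      have hmono : MonotoneOn (fun y => v' y * Real.exp (-(L - δ) * y)) (Ici R) := by
        refine monoAux (convex_Ici R) (hderiv (-(L - δ))) ?_
        intro x hx
        rw [interior_Ici] at hx
        have h1 := (hode' x (mem_Ici.mpr (mem_Ioi.mp hx).le)).2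
        have he : (0:ℝ) < Real.exp (-(L - δ) * x) := Real.exp_pos _
        have h2 : 0 ≤ v'' x + -(L - δ) * v' x := by linarith
        exact mul_nonneg h2 he.le
      intro s hs
      have hle := hmono self_mem_Ici hs hs
      rw [hC₂def]
      calc (v' R * Real.exp (-(L - δ) * R)) * Real.exp ((L - δ) * s)
          ≤ (v' s * Real.exp (-(L - δ) * s)) * Real.exp ((L - δ) * s) :=
            mul_le_mul_of_nonneg_right hle (Real.exp_pos _).le
        _ = v' s := by
            rw [mul_assoc, ← Real.exp_add, show -(L - δ) * s + (L - δ) * s = 0 by ring,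
              Real.exp_zero, mul_one]
    -- upper bound on v
    have hLδ : (0:ℝ) < L + δ := by linarith
    set A : ℝ := C₁ / (L + δ) with hAdef
    have hApos : 0 < A := div_pos hC₁pos hLδ
    have hupv : ∀ r ∈ Ici R, v r ≤ (v R + A) * Real.exp ((L + δ) * r) := by
      have hanti : AntitoneOn (fun y => v y - A * Real.exp ((L + δ) * y)) (Ici R) := by
        refine antiAux (f' := fun x => v' x - A * ((L + δ) * Real.exp ((L + δ) * x)))
          (convex_Ici R) (fun x hx => ?_) ?_
        · exact (hv x (hpos x hx)).sub ((expDeriv (L + δ) x).const_mul A)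
        · intro x hx
          rw [interior_Ici] at hx
          have h1 := hup' x (mem_Ici.mpr (mem_Ioi.mp hx).le)
          have hAe : A * ((L + δ) * Real.exp ((L + δ) * x)) = C₁ * Real.exp ((L + δ) * x) := by
            rw [hAdef]; field_simp
          simp only [hAe]
          linarith
      intro r hr
      have hle := hanti self_mem_Ici hr hr
      simp only at hle
      have hexp1 : (1:ℝ) ≤ Real.exp ((L + δ) * r) :=
        Real.one_le_exp (mul_nonneg hLδ.le (hpos r hr).le)
      nlinarith [Real.exp_pos ((L + δ) * R), hvpos R hR0]
    -- lower bound on v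
    have hlov : ∀ r, R + 1 ≤ r → C₂ * Real.exp ((L - δ) * r - |L - δ|) ≤ v r := by
      intro r hr
      set B : ℝ := C₂ * Real.exp ((L - δ) * r - |L - δ|) with hBdef
      have hBpos : 0 < B := mul_pos hC₂pos (Real.exp_pos _)
      have hsub : Icc (r - 1) r ⊆ Ici R := fun x hx => by
        rcases hx with ⟨ha, hb⟩; simp only [mem_Ici]; linarith
      have hB : ∀ x ∈ Icc (r - 1) r, B ≤ v' x := by
        intro x hx
        refine le_trans ?_ (hlo' x (hsub hx))
        rw [hBdef]
        refine mul_le_mul_of_nonneg_left ?_ hC₂pos.le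
        apply Real.exp_le_exp.mpr
        rcases hx with ⟨ha, hb⟩
        have k1 : (L - δ) * (r - x) ≤ |L - δ| * (r - x) :=
          mul_le_mul_of_nonneg_right (le_abs_self _) (by linarith)
        have k2 : |L - δ| * (r - x) ≤ |L - δ| * 1 :=
          mul_le_mul_of_nonneg_left (by linarith) (abs_nonneg _)
        nlinarith
      have hmono : MonotoneOn (fun y => v y - B * y) (Icc (r - 1) r) := by
        refine monoAux (f' := fun x => v' x - B * 1) (convex_Icc _ _) (fun x hx => ?_) ?_
        · exact (hv x (hpos x (hsub hx))).sub ((hasDerivAt_id x).const_mul B)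
        · intro x hx
          rw [interior_Icc] at hx
          have := hB x (Ioo_subset_Icc_self hx)
          simp only [mul_one]
          linarith
      have hle := hmono (show r - 1 ∈ Icc (r-1) r by constructor <;> linarith)
        (show r ∈ Icc (r-1) r by constructor <;> linarith) (by linarith)
      simp only at hle
      have hv1 : 0 < v (r - 1) := hvpos _ (by linarith)
      nlinarith
    -- conclude
    have he1 : ∀ᶠ r : ℝ in atTop, |Real.log (v R + A) / r| ≤ δ := by
      have ht : Tendsto (fun r : ℝ => Real.log (v R + A) / r) atTop (nhds 0) :=
        tendsto_const_nhds.div_atTop tendsto_id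
      filter_upwards [Metric.tendsto_nhds.mp ht δ hδ] with r hr
      rw [Real.dist_eq, sub_zero] at hr; exact hr.le
    have he2 : ∀ᶠ r : ℝ in atTop, |(Real.log C₂ - |L - δ|) / r| ≤ δ := by
      have ht : Tendsto (fun r : ℝ => (Real.log C₂ - |L - δ|) / r) atTop (nhds 0) :=
        tendsto_const_nhds.div_atTop tendsto_id
      filter_upwards [Metric.tendsto_nhds.mp ht δ hδ] with r hr
      rw [Real.dist_eq, sub_zero] at hr; exact hr.le
    filter_upwards [he1, he2, eventually_ge_atTop (R + 1), eventually_gt_atTop (0:ℝ)]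
      with r habs1 habs2 hrR hr0
    have hrIci : r ∈ Ici R := by simp only [mem_Ici]; linarith
    have hvr : 0 < v r := hvpos r hr0
    have hub : Real.log (v r) / r ≤ L + 2 * δ := by
      have h2 : Real.log (v r) ≤ Real.log (v R + A) + (L + δ) * r := by
        calc Real.log (v r) ≤ Real.log ((v R + A) * Real.exp ((L + δ) * r)) :=
              Real.log_le_log hvr (hupv r hrIci)
          _ = Real.log (v R + A) + (L + δ) * r := by
              rw [Real.log_mul (add_pos (hvpos R hR0) hApos).ne' (Real.exp_ne_zero _), Real.log_exp]
      have h3 : Real.log (v r) / r ≤ (Real.log (v R + A) + (L + δ) * r) / r := by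
        gcongr
      rw [add_div, mul_div_assoc, div_self hr0.ne', mul_one] at h3
      have := le_abs_self (Real.log (v R + A) / r)
      linarith
    have hlb : L - 2 * δ ≤ Real.log (v r) / r := by
      have h2 : Real.log C₂ + ((L - δ) * r - |L - δ|) ≤ Real.log (v r) := by
        calc Real.log C₂ + ((L - δ) * r - |L - δ|)
            = Real.log (C₂ * Real.exp ((L - δ) * r - |L - δ|)) := by
              rw [Real.log_mul hC₂pos.ne' (Real.exp_ne_zero _), Real.log_exp]
          _ ≤ Real.log (v r) :=
              Real.log_le_log (mul_pos hC₂pos (Real.exp_pos _)) (hlov r hrR)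
      have h3 : (Real.log C₂ + ((L - δ) * r - |L - δ|)) / r ≤ Real.log (v r) / r := by
        gcongr
      have h4 : (Real.log C₂ + ((L - δ) * r - |L - δ|)) / r
          = (Real.log C₂ - |L - δ|) / r + (L - δ) := by
        field_simp; ring
      rw [h4] at h3
      have := neg_abs_le ((Real.log C₂ - |L - δ|) / r)
      linarith
    rw [abs_le]
    constructor <;> [linarith; linarith]
  rw [Metric.tendsto_nhds]
  intro ε hε
  filter_upwards [key (ε / 2) (by positivity)] with r hr
  rw [Real.dist_eq]
  calc |Real.log (v r) / r - L| ≤ ε / 2 := hr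
    _ < ε := by linarith
end

section
/- Let m ≥ 2 be an integer, let T ∈ (0,∞], and let θ : (0,T) → (0,∞) be twice continuously differentiable and integrable near 0, such that h(t) := θ'(t)/((m−1)θ(t)) satisfies h'(t) < 0 for all t ∈ (0,T). Define v(t) = ∫₀^t θ(s) ds and a(t) = v(t)/θ(t), and let L = sup_{t∈(0,T)} v(t). Then v is a strictly increasing bijection from (0,T) onto (0,L), the function g : (0,L) → ℝ defined by g(s) = s·a(v⁻¹(s)) is twice differentiable with g''(s) = (2a'(t)² − (m−1)a(t)²h'(t))/θ(t) > 0 at t = v⁻¹(s), and in particular g is strictly convex on (0,L). -/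
open Set MeasureTheory Filter Function Topology

theorem stmt_10 (m : ℕ) (hm : 2 ≤ m) (T : EReal) (hT : 0 < T)
    (S : Set ℝ) (hS : S = {t : ℝ | 0 < t ∧ (t : EReal) < T})
    (θ v a g : ℝ → ℝ) (L : EReal)
    (hθpos : ∀ t ∈ S, 0 < θ t)
    (hθC2 : ContDiffOn ℝ 2 θ S)
    (hθint : ∃ ε > (0:ℝ), IntegrableOn θ (Ioc 0 ε))
    (hh' : ∀ t ∈ S, deriv (fun s => deriv θ s / (((m:ℝ) - 1) * θ s)) t < 0)
    (hv : ∀ t, v t = ∫ s in (0:ℝ)..t, θ s)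
    (ha : ∀ t, a t = v t / θ t)
    (hL : L = ⨆ t ∈ S, (v t : EReal))
    (hg : ∀ y, g y = y * a (Function.invFunOn v S y)) :
    StrictMonoOn v S ∧
    v '' S = {y : ℝ | 0 < y ∧ (y : EReal) < L} ∧
    (∀ y : ℝ, 0 < y → (y : EReal) < L →
      ∃ t ∈ S, v t = y ∧
        DifferentiableAt ℝ g y ∧ DifferentiableAt ℝ (deriv g) y ∧
        deriv (deriv g) y =
          (2 * (deriv a t) ^ 2
            - ((m:ℝ) - 1) * (a t) ^ 2
              * deriv (fun s => deriv θ s / (((m:ℝ) - 1) * θ s)) t) / θ t ∧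
        0 < deriv (deriv g) y) ∧
    StrictConvexOn ℝ {y : ℝ | 0 < y ∧ (y : EReal) < L} g := by
  classical
  have hm1 : (1:ℝ) ≤ (m:ℝ) - 1 := by
    have h2 : (2:ℝ) ≤ (m:ℝ) := by exact_mod_cast hm
    linarith
  have hm0 : ((m:ℝ) - 1) ≠ 0 := by linarith
  have hmemS : ∀ t : ℝ, t ∈ S ↔ 0 < t ∧ (t : EReal) < T := fun t => by
    rw [hS]; exact Iff.rfl
  have hSopen : IsOpen S := by
    rw [hS, setOf_and]
    exact (isOpen_lt continuous_const continuous_id).inter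
      (isOpen_Iio.preimage continuous_coe_real_ereal)
  have hSsub : ∀ t ∈ S, ∀ s : ℝ, 0 < s → s ≤ t → s ∈ S := by
    intro t ht s hs hst
    rw [hmemS] at ht ⊢
    exact ⟨hs, lt_of_le_of_lt (EReal.coe_le_coe_iff.2 hst) ht.2⟩
  have hθcont : ContinuousOn θ S := hθC2.continuousOn
  obtain ⟨ε, hε, hεint⟩ := hθint
  have hIIε : IntervalIntegrable θ volume 0 ε := by
    rw [intervalIntegrable_iff_integrableOn_Ioc_of_le hε.le]
    exact hεint
  have hInt : ∀ t ∈ S, IntervalIntegrable θ volume 0 t := by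
    intro t ht
    have ht0 : 0 < t := ((hmemS t).1 ht).1
    rcases le_total t ε with h | h
    · exact hIIε.mono_set (by rw [uIcc_of_le ht0.le, uIcc_of_le hε.le]; exact Icc_subset_Icc le_rfl h)
    · refine hIIε.trans ?_
      apply ContinuousOn.intervalIntegrable
      apply hθcont.mono
      rw [uIcc_of_le h]
      intro s hs
      exact hSsub t ht s (lt_of_lt_of_le hε hs.1) hs.2
  have hveq : v = fun u => ∫ s in (0:ℝ)..u, θ s := funext hv
  have hvd : ∀ t ∈ S, HasDerivAt v (θ t) t := by
    intro t ht
    rw [hveq]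
    exact intervalIntegral.integral_hasDerivAt_right (hInt t ht)
      (hθcont.stronglyMeasurableAtFilter hSopen t ht)
      (hθcont.continuousAt (hSopen.mem_nhds ht))
  have hvsd : ∀ t ∈ S, HasStrictDerivAt v (θ t) t := by
    intro t ht
    rw [hveq]
    exact intervalIntegral.integral_hasStrictDerivAt_right (hInt t ht)
      (hθcont.stronglyMeasurableAtFilter hSopen t ht)
      (hθcont.continuousAt (hSopen.mem_nhds ht))
  have hvcont : ContinuousOn v S := fun t ht =>
    ((hvd t ht).continuousAt).continuousWithinAt
  have hordS : S.OrdConnected := by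
    constructor
    intro x hx y hy z hz
    exact hSsub y hy z (lt_of_lt_of_le ((hmemS x).1 hx).1 hz.1) hz.2
  have hconvS : Convex ℝ S := hordS.convex
  have hmono : StrictMonoOn v S := by
    apply strictMonoOn_of_deriv_pos hconvS hvcont
    intro t ht
    rw [hSopen.interior_eq] at ht
    rw [(hvd t ht).deriv]
    exact hθpos t ht
  have hinj : InjOn v S := hmono.injOn
  have hvpos : ∀ t ∈ S, 0 < v t := by
    intro t ht
    have ht0 : 0 < t := ((hmemS t).1 ht).1
    rw [hv t]
    refine intervalIntegral.intervalIntegral_pos_of_pos_on (hInt t ht) ?_ ht0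
    intro x hx
    exact hθpos x (hSsub t ht x hx.1 hx.2.le)
  have hvltL : ∀ t ∈ S, (v t : EReal) < L := by
    intro t ht
    obtain ⟨δ, hδ, hball⟩ := Metric.isOpen_iff.1 hSopen t ht
    have ht' : t + δ/2 ∈ S := by
      apply hball
      rw [Metric.mem_ball, Real.dist_eq]
      rw [show t + δ/2 - t = δ/2 by ring, abs_of_pos (by linarith)]
      linarith
    have h1 : v t < v (t + δ/2) := hmono ht ht' (by linarith)
    calc (v t : EReal) < (v (t + δ/2) : EReal) := EReal.coe_lt_coe_iff.2 h1
      _ ≤ L := by rw [hL]; exact le_iSup₂ (f := fun t _ => (v t : EReal)) (t + δ/2) ht'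
  have hv0 : ContinuousWithinAt v (Icc 0 ε) 0 := by
    rw [hveq]
    apply intervalIntegral.continuousWithinAt_primitive (measure_singleton 0)
    rw [min_self, max_eq_right hε.le]
    exact hIIε
  have hsurj : ∀ y : ℝ, 0 < y → (y : EReal) < L → ∃ t ∈ S, v t = y := by
    intro y hy1 hy2
    rw [hL, lt_iSup_iff] at hy2
    obtain ⟨t₂, hy2⟩ := hy2
    rw [lt_iSup_iff] at hy2
    obtain ⟨ht₂, hy2⟩ := hy2
    have hy2' : y < v t₂ := EReal.coe_lt_coe_iff.1 hy2
    have ht₂0 : 0 < t₂ := ((hmemS t₂).1 ht₂).1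
    -- find a small t₁ with v t₁ < y
    have htend : Tendsto v (𝓝[Icc 0 ε] 0) (𝓝 0) := by
      have : v 0 = 0 := by rw [hv 0, intervalIntegral.integral_same]
      simpa [ContinuousWithinAt, this] using hv0
    have hev : ∀ᶠ x in 𝓝[Icc 0 ε] 0, v x < y := htend.eventually_lt_const hy1
    have hle : 𝓝[Ioo 0 (min ε t₂)] (0:ℝ) ≤ 𝓝[Icc 0 ε] 0 :=
      nhdsWithin_mono _ (fun x hx => ⟨hx.1.le, hx.2.le.trans (min_le_left _ _)⟩)
    have hpos : (0:ℝ) < min ε t₂ := lt_min hε ht₂0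
    haveI : (𝓝[Ioo 0 (min ε t₂)] (0:ℝ)).NeBot := left_nhdsWithin_Ioo_neBot hpos
    obtain ⟨t₁, ht₁v, ht₁m⟩ := ((hev.filter_mono hle).and eventually_mem_nhdsWithin).exists
    have ht₁S : t₁ ∈ S := hSsub t₂ ht₂ t₁ ht₁m.1 (ht₁m.2.le.trans (min_le_right _ _))
    have ht₁₂ : t₁ ≤ t₂ := ht₁m.2.le.trans (min_le_right _ _)
    have hIccS : Icc t₁ t₂ ⊆ S := fun s hs => hSsub t₂ ht₂ s (lt_of_lt_of_le ht₁m.1 hs.1) hs.2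
    have := intermediate_value_Icc ht₁₂ (hvcont.mono hIccS)
    obtain ⟨t, htmem, htv⟩ := this ⟨ht₁v.le, hy2'.le⟩
    exact ⟨t, hIccS htmem, htv⟩
  have himg : v '' S = {y : ℝ | 0 < y ∧ (y : EReal) < L} := by
    ext y
    constructor
    · rintro ⟨t, ht, rfl⟩
      exact ⟨hvpos t ht, hvltL t ht⟩
    · rintro ⟨hy1, hy2⟩
      obtain ⟨t, ht, htv⟩ := hsurj y hy1 hy2
      exact ⟨t, ht, htv⟩
  -- inverse function basics
  set w := Function.invFunOn v S with hw
  have hwmem : ∀ y : ℝ, 0 < y → (y : EReal) < L → w y ∈ S ∧ v (w y) = y := by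
    intro y hy1 hy2
    obtain ⟨t, ht, htv⟩ := hsurj y hy1 hy2
    exact ⟨Function.invFunOn_mem ⟨t, ht, htv⟩, Function.invFunOn_eq ⟨t, ht, htv⟩⟩
  have hDopen : IsOpen {y : ℝ | 0 < y ∧ (y : EReal) < L} := by
    rw [setOf_and]
    exact (isOpen_lt continuous_const continuous_id).inter
      (isOpen_Iio.preimage continuous_coe_real_ereal)
  have hwd : ∀ y : ℝ, 0 < y → (y : EReal) < L → HasDerivAt w (θ (w y))⁻¹ y := by
    intro y hy1 hy2
    obtain ⟨htS, hvt⟩ := hwmem y hy1 hy2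
    set t₀ := w y with ht₀
    have hθ0 : θ t₀ ≠ 0 := (hθpos t₀ htS).ne'
    have hsd : HasStrictDerivAt v (θ t₀) t₀ := hvsd t₀ htS
    have hF := hsd.hasStrictFDerivAt_equiv hθ0
    have hli : HasStrictDerivAt (hsd.localInverse v (θ t₀) t₀ hθ0) (θ t₀)⁻¹ y := by
      have := hsd.to_localInverse (hf' := hθ0)
      rwa [hvt] at this
    have hri : ∀ᶠ z in 𝓝 y, v (hsd.localInverse v (θ t₀) t₀ hθ0 z) = z := by
      have := hF.eventually_right_inverse
      rwa [hvt] at this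
    have happ : hsd.localInverse v (θ t₀) t₀ hθ0 y = t₀ := by
      have := hF.localInverse_apply_image
      rwa [hvt] at this
    have hca : ContinuousAt (hsd.localInverse v (θ t₀) t₀ hθ0) y := by
      have := hF.localInverse_continuousAt
      rwa [hvt] at this
    have hliS : ∀ᶠ z in 𝓝 y, hsd.localInverse v (θ t₀) t₀ hθ0 z ∈ S :=
      hca.eventually_mem (by rw [happ]; exact hSopen.mem_nhds htS)
    have hmemD : ∀ᶠ z in 𝓝 y, z ∈ {y : ℝ | 0 < y ∧ (y : EReal) < L} :=
      hDopen.eventually_mem ⟨hy1, hy2⟩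
    have heq : w =ᶠ[𝓝 y] hsd.localInverse v (θ t₀) t₀ hθ0 := by
      filter_upwards [hri, hliS, hmemD] with z hz1 hz2 hz3
      exact hinj (hwmem z hz3.1 hz3.2).1 hz2 (by rw [(hwmem z hz3.1 hz3.2).2, hz1])
    exact hli.hasDerivAt.congr_of_eventuallyEq heq
  -- differentiability facts for θ and a
  have hθC2' : ContDiffOn ℝ (1+1) θ S := by exact_mod_cast hθC2
  have hθ1 : ContDiffOn ℝ 1 (deriv θ) S :=
    ((contDiffOn_succ_iff_deriv_of_isOpen hSopen).1 hθC2').2.2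
  have hθda : ∀ t ∈ S, DifferentiableAt ℝ θ t := fun t ht =>
    ((hθC2.differentiableOn (by norm_num)) t ht).differentiableAt (hSopen.mem_nhds ht)
  have hθ'da : ∀ t ∈ S, DifferentiableAt ℝ (deriv θ) t := fun t ht =>
    ((hθ1.differentiableOn (by norm_num)) t ht).differentiableAt (hSopen.mem_nhds ht)
  have haeq : a = fun t => v t / θ t := funext ha
  have hada : ∀ t ∈ S, HasDerivAt a ((θ t * θ t - v t * deriv θ t) / θ t ^ 2) t := by
    intro t ht
    rw [haeq]
    exact (hvd t ht).div ((hθda t ht).hasDerivAt) (hθpos t ht).ne'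
  have hapos : ∀ t ∈ S, 0 < a t := by
    intro t ht
    rw [ha t]
    exact div_pos (hvpos t ht) (hθpos t ht)
  have hkey : ∀ t ∈ S, deriv a t =
      1 - ((m:ℝ) - 1) * (a t * (deriv θ t / (((m:ℝ) - 1) * θ t))) := by
    intro t ht
    rw [(hada t ht).deriv, ha t]
    have hθ0 : θ t ≠ 0 := (hθpos t ht).ne'
    field_simp
  have hhda : ∀ t ∈ S, DifferentiableAt ℝ (fun s => deriv θ s / (((m:ℝ) - 1) * θ s)) t := by
    intro t ht
    exact (hθ'da t ht).div ((differentiableAt_const _).mul (hθda t ht))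
      (mul_ne_zero hm0 (hθpos t ht).ne')
  have hdda : ∀ t ∈ S, HasDerivAt (deriv a)
      (-(((m:ℝ) - 1) * (deriv a t * (deriv θ t / (((m:ℝ) - 1) * θ t))
        + a t * deriv (fun s => deriv θ s / (((m:ℝ) - 1) * θ s)) t))) t := by
    intro t ht
    have hA : HasDerivAt a (deriv a t) t := (hada t ht).differentiableAt.hasDerivAt
    have hH : HasDerivAt (fun s => deriv θ s / (((m:ℝ) - 1) * θ s))
        (deriv (fun s => deriv θ s / (((m:ℝ) - 1) * θ s)) t) t := (hhda t ht).hasDerivAt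
    have hA1 : HasDerivAt (fun s => 1 - ((m:ℝ) - 1) *
        (a s * (deriv θ s / (((m:ℝ) - 1) * θ s))))
        (-(((m:ℝ) - 1) * (deriv a t * (deriv θ t / (((m:ℝ) - 1) * θ t))
          + a t * deriv (fun s => deriv θ s / (((m:ℝ) - 1) * θ s)) t))) t := by
      exact ((hA.mul hH).const_mul (((m:ℝ) - 1))).const_sub 1
    apply hA1.congr_of_eventuallyEq
    filter_upwards [hSopen.mem_nhds ht] with s hs
    exact hkey s hs
  -- derivative of g
  have hgeq : g = fun y => y * a (w y) := funext hg
  have hgd : ∀ y : ℝ, 0 < y → (y : EReal) < L →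
      HasDerivAt g (a (w y) * (1 + deriv a (w y))) y := by
    intro y hy1 hy2
    obtain ⟨htS, hvt⟩ := hwmem y hy1 hy2
    have hA : HasDerivAt a (deriv a (w y)) (w y) := (hada _ htS).differentiableAt.hasDerivAt
    have hcomp : HasDerivAt (fun z => a (w z)) (deriv a (w y) * (θ (w y))⁻¹) y :=
      hA.comp y (hwd y hy1 hy2)
    have hprod : HasDerivAt (fun z => z * a (w z))
        (1 * a (w y) + y * (deriv a (w y) * (θ (w y))⁻¹)) y :=
      (hasDerivAt_id y).mul hcomp
    rw [hgeq]
    convert hprod using 1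
    have hθ0 : θ (w y) ≠ 0 := (hθpos _ htS).ne'
    rw [ha (w y), hvt]
    field_simp
  have hgderiv : ∀ y : ℝ, 0 < y → (y : EReal) < L →
      deriv g y = a (w y) * (1 + deriv a (w y)) := fun y hy1 hy2 => (hgd y hy1 hy2).deriv
  -- second derivative of g
  have hgd2 : ∀ y : ℝ, 0 < y → (y : EReal) < L →
      HasDerivAt (deriv g)
        ((deriv a (w y) * (1 + deriv a (w y)) + a (w y) * deriv (deriv a) (w y))
          * (θ (w y))⁻¹) y := by
    intro y hy1 hy2
    obtain ⟨htS, hvt⟩ := hwmem y hy1 hy2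
    have hA : HasDerivAt a (deriv a (w y)) (w y) := (hada _ htS).differentiableAt.hasDerivAt
    have hDA : HasDerivAt (deriv a) (deriv (deriv a) (w y)) (w y) :=
      (hdda _ htS).differentiableAt.hasDerivAt
    have hG1 : HasDerivAt (fun s => a s * (1 + deriv a s))
        (deriv a (w y) * (1 + deriv a (w y)) + a (w y) * deriv (deriv a) (w y)) (w y) := by
      have := hA.mul (hDA.const_add 1)
      exact this
    have hcomp : HasDerivAt (fun z => a (w z) * (1 + deriv a (w z)))
        ((deriv a (w y) * (1 + deriv a (w y)) + a (w y) * deriv (deriv a) (w y))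
          * (θ (w y))⁻¹) y := hG1.comp y (hwd y hy1 hy2)
    apply hcomp.congr_of_eventuallyEq
    filter_upwards [hDopen.eventually_mem (⟨hy1, hy2⟩ : y ∈ {y : ℝ | 0 < y ∧ (y : EReal) < L})]
      with z hz
    exact hgderiv z hz.1 hz.2
  have hmain : ∀ y : ℝ, 0 < y → (y : EReal) < L →
      DifferentiableAt ℝ g y ∧ DifferentiableAt ℝ (deriv g) y ∧
      deriv (deriv g) y =
        (2 * (deriv a (w y)) ^ 2
          - ((m:ℝ) - 1) * (a (w y)) ^ 2
            * deriv (fun s => deriv θ s / (((m:ℝ) - 1) * θ s)) (w y)) / θ (w y) ∧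
      0 < deriv (deriv g) y := by
    intro y hy1 hy2
    obtain ⟨htS, hvt⟩ := hwmem y hy1 hy2
    have hθ0 : θ (w y) ≠ 0 := (hθpos _ htS).ne'
    have hd2 := (hgd2 y hy1 hy2).deriv
    have hddaeq : deriv (deriv a) (w y) =
        -(((m:ℝ) - 1) * (deriv a (w y) * (deriv θ (w y) / (((m:ℝ) - 1) * θ (w y)))
          + a (w y) * deriv (fun s => deriv θ s / (((m:ℝ) - 1) * θ s)) (w y))) :=
      (hdda _ htS).deriv
    have hrel := hkey (w y) htS
    have hform : deriv (deriv g) y =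
        (2 * (deriv a (w y)) ^ 2
          - ((m:ℝ) - 1) * (a (w y)) ^ 2
            * deriv (fun s => deriv θ s / (((m:ℝ) - 1) * θ s)) (w y)) / θ (w y) := by
      rw [hd2, hddaeq, div_eq_mul_inv]
      congr 1
      linear_combination (-(deriv a (w y))) * hrel
    refine ⟨(hgd y hy1 hy2).differentiableAt, (hgd2 y hy1 hy2).differentiableAt, hform, ?_⟩
    rw [hform]
    apply div_pos _ (hθpos _ htS)
    have h1 := hh' (w y) htS
    have h2 := hapos (w y) htS
    have h3 : 0 < ((m:ℝ) - 1) * (a (w y)) ^ 2 *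
        (-(deriv (fun s => deriv θ s / (((m:ℝ) - 1) * θ s)) (w y))) :=
      mul_pos (mul_pos (by linarith) (pow_pos h2 2)) (by linarith)
    nlinarith [h3, sq_nonneg (deriv a (w y))]
  refine ⟨hmono, himg, ?_, ?_⟩
  · intro y hy1 hy2
    obtain ⟨htS, hvt⟩ := hwmem y hy1 hy2
    obtain ⟨h1, h2, h3, h4⟩ := hmain y hy1 hy2
    exact ⟨w y, htS, hvt, h1, h2, h3, h4⟩
  · have hordD : ({y : ℝ | 0 < y ∧ (y : EReal) < L}).OrdConnected := by
      constructor
      intro x hx y hy z hz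
      exact ⟨lt_of_lt_of_le hx.1 hz.1,
        lt_of_le_of_lt (EReal.coe_le_coe_iff.2 hz.2) hy.2⟩
    apply strictConvexOn_of_deriv2_pos hordD.convex
    · intro y hy
      exact (hgd y hy.1 hy.2).differentiableAt.continuousAt.continuousWithinAt
    · intro y hy
      rw [hDopen.interior_eq] at hy
      have := (hmain y hy.1 hy.2).2.2.2
      exact this
end

section
/- Let m ≥ 2 be an integer and define a₁ : (0,π) → ℝ by a₁(r) = m·(∫₀^r sin(t)^{m−1} dt)/sin(r)^{m−1}. Then a₁ is differentiable with a₁'(r) = m − (m−1)·(cos(r)/sin(r))·a₁(r), and for every R ∈ (π/2, π) one has (a₁'(R) − a₁'(π−R))/(a₁(R) + a₁(π−R)) = (m−1)·cos(π−R)/sin(π−R). -/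
open Real

theorem stmt_12 (m : ℕ) (hm : 2 ≤ m) (a₁ : ℝ → ℝ)
    (ha₁ : ∀ r, a₁ r =
      (m:ℝ) * (∫ t in (0:ℝ)..r, Real.sin t ^ (m - 1)) / Real.sin r ^ (m - 1)) :
    (∀ r ∈ Set.Ioo (0:ℝ) π,
      HasDerivAt a₁ ((m:ℝ) - ((m:ℝ) - 1) * (Real.cos r / Real.sin r) * a₁ r) r)
    ∧ ∀ R ∈ Set.Ioo (π/2) π,
      (deriv a₁ R - deriv a₁ (π - R)) / (a₁ R + a₁ (π - R))
        = ((m:ℝ) - 1) * Real.cos (π - R) / Real.sin (π - R) := by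
  obtain ⟨k, rfl⟩ : ∃ k, m = k + 2 := ⟨m - 2, by omega⟩
  have hcont : Continuous fun t : ℝ => Real.sin t ^ (k + 2 - 1) :=
    Real.continuous_sin.pow _
  have key : ∀ r ∈ Set.Ioo (0:ℝ) π,
      HasDerivAt a₁ (((k+2:ℕ):ℝ) - (((k+2:ℕ):ℝ) - 1) * (Real.cos r / Real.sin r) * a₁ r) r := by
    intro r hr
    have hs : Real.sin r ≠ 0 := ne_of_gt (Real.sin_pos_of_pos_of_lt_pi hr.1 hr.2)
    have hF : HasDerivAt (fun x => ∫ t in (0:ℝ)..x, Real.sin t ^ (k+2-1))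
        (Real.sin r ^ (k+2-1)) r :=
      intervalIntegral.integral_hasDerivAt_right
        (hcont.intervalIntegrable _ _) (hcont.stronglyMeasurableAtFilter _ _)
        hcont.continuousAt
    have hg : HasDerivAt (fun x => Real.sin x ^ (k+2-1))
        (((k+1:ℕ):ℝ) * Real.sin r ^ k * Real.cos r) r := by
      have := (Real.hasDerivAt_sin r).fun_pow (k+1)
      simpa using this
    have hq : HasDerivAt (fun x => ((k+2:ℕ):ℝ) *
          (∫ t in (0:ℝ)..x, Real.sin t ^ (k+2-1)) / Real.sin x ^ (k+2-1))
        ((((k+2:ℕ):ℝ) * Real.sin r ^ (k+2-1) * Real.sin r ^ (k+2-1)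
          - ((k+2:ℕ):ℝ) * (∫ t in (0:ℝ)..r, Real.sin t ^ (k+2-1))
            * (((k+1:ℕ):ℝ) * Real.sin r ^ k * Real.cos r))
         / (Real.sin r ^ (k+2-1))^2) r :=
      (hF.const_mul ((k+2:ℕ):ℝ)).div hg (pow_ne_zero _ hs)
    rw [show a₁ = fun x => ((k+2:ℕ):ℝ) *
          (∫ t in (0:ℝ)..x, Real.sin t ^ (k+2-1)) / Real.sin x ^ (k+2-1) from funext ha₁]
    convert hq using 1
    have h1 : Real.sin r ^ (k+2-1) = Real.sin r ^ k * Real.sin r := by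
      rw [show k+2-1 = k+1 from rfl, pow_succ]
    push_cast
    field_simp [h1]
    ring
  refine ⟨key, fun R hR => ?_⟩
  have hR1 : R ∈ Set.Ioo (0:ℝ) π := ⟨lt_trans (by positivity) hR.1, hR.2⟩
  have hR2 : π - R ∈ Set.Ioo (0:ℝ) π := ⟨by linarith [hR.2], by linarith [hR1.1]⟩
  have hpos : ∀ r ∈ Set.Ioo (0:ℝ) π, 0 < a₁ r := by
    intro r hr
    rw [ha₁]
    have hs := Real.sin_pos_of_pos_of_lt_pi hr.1 hr.2
    have hF : 0 < ∫ t in (0:ℝ)..r, Real.sin t ^ (k+2-1) :=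
      intervalIntegral.intervalIntegral_pos_of_pos_on
        (hcont.intervalIntegrable _ _)
        (fun t ht => pow_pos (Real.sin_pos_of_pos_of_lt_pi ht.1 (ht.2.trans hr.2)) _)
        hr.1
    positivity
  have hsum : 0 < a₁ R + a₁ (π - R) := add_pos (hpos R hR1) (hpos _ hR2)
  have hsR : Real.sin R ≠ 0 := ne_of_gt (Real.sin_pos_of_pos_of_lt_pi hR1.1 hR1.2)
  rw [(key R hR1).deriv, (key (π - R) hR2).deriv, Real.cos_pi_sub, Real.sin_pi_sub]
  rw [div_eq_iff hsum.ne']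
  field_simp
  ring
end

section
/- Let m ≥ 2 be an integer, let λ > m−1, and let a : (0,π) → ℝ be twice continuously differentiable with a''(r) + (m−1)·(cos(r)/sin(r))·a'(r) − (λ/sin(r)²)·a(r) = 0 on (0,π), and suppose a(r) = O(r²) and a'(r) = O(r) as r → 0⁺. Then for every r ∈ (0,π) the integral ∫₀^r a(t)/sin(t)² dt converges, and a'(r) = −(m−1)·(cos(r)/sin(r))·a(r) + (λ−(m−1))·∫₀^r a(t)/sin(t)² dt. -/
open Real Asymptotics

theorem stmt_14 (m : ℕ) (hm : 2 ≤ m) (lam : ℝ) (hlam : (m:ℝ) - 1 < lam)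
    (a : ℝ → ℝ)
    (haC2 : ContDiffOn ℝ 2 a (Set.Ioo 0 π))
    (hode : ∀ r ∈ Set.Ioo (0:ℝ) π,
      deriv (deriv a) r + ((m:ℝ) - 1) * (Real.cos r / Real.sin r) * deriv a r
        - (lam / Real.sin r ^ 2) * a r = 0)
    (ha0 : a =O[nhdsWithin 0 (Set.Ioi 0)] fun r => r ^ 2)
    (ha'0 : deriv a =O[nhdsWithin 0 (Set.Ioi 0)] fun r => r) :
    ∀ r ∈ Set.Ioo (0:ℝ) π,
      IntervalIntegrable (fun t => a t / Real.sin t ^ 2) MeasureTheory.volume 0 r ∧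
      deriv a r = -((m:ℝ) - 1) * (Real.cos r / Real.sin r) * a r
        + (lam - ((m:ℝ) - 1)) * ∫ t in (0:ℝ)..r, a t / Real.sin t ^ 2 := by
  set c : ℝ := (m:ℝ) - 1 with hc
  set g : ℝ → ℝ := fun t => a t / Real.sin t ^ 2 with hgdef
  have hsin : ∀ t ∈ Set.Ioo (0:ℝ) π, 0 < Real.sin t := fun t ht =>
    Real.sin_pos_of_pos_of_lt_pi ht.1 ht.2
  have hgcont : ContinuousOn g (Set.Ioo 0 π) := by
    apply (haC2.continuousOn).div ((Real.continuous_sin.pow 2).continuousOn)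
    intro t ht; exact pow_ne_zero 2 (hsin t ht).ne'
  -- sin t / t → 1 within punctured nbhd
  have hs1 : Filter.Tendsto (fun t : ℝ => Real.sin t / t) (nhdsWithin 0 {(0:ℝ)}ᶜ) (nhds 1) := by
    have h := Real.hasDerivAt_sin 0
    rw [hasDerivAt_iff_tendsto_slope] at h
    simpa [slope_fun_def, Real.sin_zero, Real.cos_zero, div_eq_inv_mul] using h
  have hle : nhdsWithin (0:ℝ) (Set.Ioi 0) ≤ nhdsWithin 0 {(0:ℝ)}ᶜ :=
    nhdsWithin_mono 0 (fun x hx => ne_of_gt hx)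
  have hinv : Filter.Tendsto (fun t : ℝ => t / Real.sin t) (nhdsWithin 0 (Set.Ioi 0)) (nhds 1) := by
    have := ((hs1.mono_left hle).inv₀ one_ne_zero)
    simpa [inv_div] using this
  -- g = O(1) near 0+
  have hg1 : g =O[nhdsWithin 0 (Set.Ioi 0)] (fun _ : ℝ => (1:ℝ)) := by
    have hsininv : (fun t : ℝ => (Real.sin t ^ 2)⁻¹)
        =O[nhdsWithin 0 (Set.Ioi 0)] (fun t : ℝ => (t ^ 2)⁻¹) := by
      refine Asymptotics.isBigO_of_div_tendsto_nhds ?_ 1 ?_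
      · filter_upwards [self_mem_nhdsWithin] with t ht h0
        rw [inv_eq_zero] at h0
        exact absurd h0 (pow_pos ht 2).ne'
      · have h2 : Filter.Tendsto (fun t : ℝ => (t / Real.sin t) ^ 2)
            (nhdsWithin 0 (Set.Ioi 0)) (nhds 1) := by
          simpa using hinv.pow 2
        apply h2.congr
        intro t
        simp only [Pi.div_apply, div_eq_mul_inv, inv_inv]
        ring
    have hmul := ha0.mul hsininv
    refine hmul.congr' ?_ ?_
    · filter_upwards with t
      simp [hgdef, div_eq_mul_inv]
    · filter_upwards [self_mem_nhdsWithin] with t ht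
      have ht' : (0:ℝ) < t := ht
      field_simp
  -- bound near 0
  obtain ⟨C, hC⟩ := hg1.isBigOWith
  rw [Asymptotics.isBigOWith_iff] at hC
  rw [Filter.Eventually, Metric.mem_nhdsWithin_iff] at hC
  obtain ⟨δ, hδpos, hδ⟩ := hC
  intro r hr
  have hr0 : (0:ℝ) < r := hr.1
  have hrπ : r < π := hr.2
  -- integrability of g on [0, r]
  set δ' : ℝ := min (δ/2) (r/2) with hδ'def
  have hδ'pos : 0 < δ' := lt_min (by linarith) (by linarith)
  have hδ'r : δ' ≤ r := le_trans (min_le_right _ _) (by linarith)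
  have hδ'δ : δ' < δ := lt_of_le_of_lt (min_le_left _ _) (by linarith)
  have hint : MeasureTheory.IntegrableOn g (Set.Ioc 0 r) MeasureTheory.volume := by
    have h1 : MeasureTheory.IntegrableOn g (Set.Ioc 0 δ') MeasureTheory.volume := by
      have hbound : ∀ t ∈ Set.Ioc (0:ℝ) δ', ‖g t‖ ≤ ‖C‖ := by
        intro t ht
        have h := hδ ⟨by
          rw [Metric.mem_ball, Real.dist_eq, sub_zero, abs_of_pos ht.1]
          exact lt_of_le_of_lt ht.2 hδ'δ, Set.mem_Ioi.2 ht.1⟩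
        simp only [Set.mem_setOf_eq, norm_one, mul_one] at h
        exact h.trans (le_abs_self C)
      have hmeas : MeasureTheory.AEStronglyMeasurable g
          (MeasureTheory.volume.restrict (Set.Ioc 0 δ')) := by
        apply (hgcont.mono ?_).aestronglyMeasurable measurableSet_Ioc
        intro t ht
        exact ⟨ht.1, lt_of_le_of_lt (ht.2.trans hδ'r) hrπ⟩
      refine MeasureTheory.Integrable.mono' (g := fun _ : ℝ => ‖C‖)
        (MeasureTheory.integrableOn_const measure_Ioc_lt_top.ne) hmeas ?_
      rw [MeasureTheory.ae_restrict_iff' measurableSet_Ioc]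
      filter_upwards with t ht using hbound t ht
    have h2 : MeasureTheory.IntegrableOn g (Set.Ioc δ' r) MeasureTheory.volume := by
      apply MeasureTheory.IntegrableOn.mono_set ?_ Set.Ioc_subset_Icc_self
      apply ContinuousOn.integrableOn_Icc
      apply hgcont.mono
      intro t ht
      exact ⟨lt_of_lt_of_le hδ'pos ht.1, lt_of_le_of_lt ht.2 hrπ⟩
    have := h1.union h2
    rwa [Set.Ioc_union_Ioc_eq_Ioc hδ'pos.le hδ'r] at this
  have hii : IntervalIntegrable g MeasureTheory.volume 0 r := by
    rw [intervalIntegrable_iff_integrableOn_Ioc_of_le hr0.le]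
    exact hint
  refine ⟨hii, ?_⟩
  -- the function F and its derivative
  set F : ℝ → ℝ := fun t => deriv a t + c * ((Real.cos t / Real.sin t) * a t) with hFdef
  have hF : ∀ t ∈ Set.Ioo (0:ℝ) π, HasDerivAt F ((lam - c) * g t) t := by
    intro t ht
    have hsint := hsin t ht
    have hat : HasDerivAt a (deriv a t) t :=
      ((haC2.differentiableOn two_ne_zero).differentiableAt
        (isOpen_Ioo.mem_nhds ht)).hasDerivAt
    have hda : ContDiffOn ℝ 1 (deriv a) (Set.Ioo 0 π) :=
      haC2.deriv_of_isOpen isOpen_Ioo (by norm_num)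
    have hat2 : HasDerivAt (deriv a) (deriv (deriv a) t) t :=
      ((hda.differentiableOn one_ne_zero).differentiableAt
        (isOpen_Ioo.mem_nhds ht)).hasDerivAt
    have hcot : HasDerivAt (fun u => Real.cos u / Real.sin u)
        ((-Real.sin t * Real.sin t - Real.cos t * Real.cos t) / Real.sin t ^ 2) t :=
      (Real.hasDerivAt_cos t).div (Real.hasDerivAt_sin t) hsint.ne'
    have h := hat2.add ((hcot.mul hat).const_mul c)
    refine h.congr_deriv (Eq.symm ?_)
    have hode' := hode t ht
    have hs2 : Real.sin t ^ 2 ≠ 0 := pow_ne_zero 2 hsint.ne'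
    have hpyth := Real.sin_sq_add_cos_sq t
    show (lam - c) * (a t / Real.sin t ^ 2) = _
    linear_combination (-1 : ℝ) * hode' + (c * a t / Real.sin t ^ 2) * hpyth
  -- FTC on [ε, r]
  have key : ∀ ε ∈ Set.Ioo 0 r, F r - F ε = (lam - c) * ∫ t in ε..r, g t := by
    intro ε hε
    have hsub : Set.uIcc ε r ⊆ Set.Ioo 0 π := by
      rw [Set.uIcc_of_le hε.2.le]
      exact fun t ht => ⟨lt_of_lt_of_le hε.1 ht.1, lt_of_le_of_lt ht.2 hrπ⟩
    have hii' : IntervalIntegrable (fun t => (lam - c) * g t) MeasureTheory.volume ε r := by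
      apply IntervalIntegrable.const_mul
      apply hii.mono_set
      rw [Set.uIcc_of_le hε.2.le, Set.uIcc_of_le hr0.le]
      exact fun t ht => ⟨hε.1.le.trans ht.1, ht.2⟩
    have hFTC := intervalIntegral.integral_eq_sub_of_hasDerivAt
      (fun t ht => hF t (hsub ht)) hii'
    rw [← hFTC, intervalIntegral.integral_const_mul]
  -- F tends to 0 at 0+
  have hidt : Filter.Tendsto (fun x : ℝ => x) (nhdsWithin 0 (Set.Ioi 0)) (nhds 0) :=
    Filter.tendsto_id.mono_left nhdsWithin_le_nhds
  have hF0 : Filter.Tendsto F (nhdsWithin 0 (Set.Ioi 0)) (nhds 0) := by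
    have h1 : Filter.Tendsto (deriv a) (nhdsWithin 0 (Set.Ioi 0)) (nhds 0) :=
      ha'0.trans_tendsto hidt
    have hcotO : (fun ε => Real.cos ε / Real.sin ε)
        =O[nhdsWithin 0 (Set.Ioi 0)] fun ε : ℝ => ε⁻¹ := by
      refine Asymptotics.isBigO_of_div_tendsto_nhds ?_ 1 ?_
      · filter_upwards [self_mem_nhdsWithin] with t ht h0
        rw [inv_eq_zero] at h0
        exact absurd h0 (ne_of_gt ht)
      · have hmul : Filter.Tendsto (fun ε => Real.cos ε * (ε / Real.sin ε))
            (nhdsWithin 0 (Set.Ioi 0)) (nhds 1) := by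
          have := ((Real.continuous_cos.tendsto' 0 1 (by simp)).mono_left
            nhdsWithin_le_nhds).mul hinv
          simpa using this
        apply hmul.congr
        intro t
        simp only [Pi.div_apply, div_eq_mul_inv, inv_inv]
        ring
    have h2O : (fun ε => c * ((Real.cos ε / Real.sin ε) * a ε))
        =O[nhdsWithin 0 (Set.Ioi 0)] fun ε : ℝ => ε := by
      have := (hcotO.mul ha0).const_mul_left c
      refine this.trans ?_
      apply Asymptotics.IsBigO.of_bound 1
      filter_upwards [self_mem_nhdsWithin] with t ht
      have ht' : (0:ℝ) < t := ht
      rw [one_mul, Real.norm_eq_abs, Real.norm_eq_abs]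
      rw [show t⁻¹ * t ^ 2 = t by rw [pow_two, ← mul_assoc, inv_mul_cancel₀ ht'.ne', one_mul]]
    have h2 : Filter.Tendsto (fun ε => c * ((Real.cos ε / Real.sin ε) * a ε))
        (nhdsWithin 0 (Set.Ioi 0)) (nhds 0) := h2O.trans_tendsto hidt
    have := h1.add h2
    simpa using this
  -- integral tends to the full integral
  have hIcont : Filter.Tendsto (fun x => ∫ t in x..r, g t) (nhdsWithin 0 (Set.Ioi 0))
      (nhds (∫ t in (0:ℝ)..r, g t)) := by
    have hIcc : MeasureTheory.IntegrableOn g (Set.uIcc 0 r) MeasureTheory.volume := by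
      rw [Set.uIcc_of_le hr0.le, integrableOn_Icc_iff_integrableOn_Ioc]
      exact hint
    have hcont := intervalIntegral.continuousOn_primitive_interval_left hIcc
    have h0mem : (0:ℝ) ∈ Set.uIcc 0 r := Set.left_mem_uIcc
    have htend := (hcont 0 h0mem).tendsto
    apply htend.mono_left
    rw [Set.uIcc_of_le hr0.le, ← nhdsWithin_Ioc_eq_nhdsGT hr0]
    exact nhdsWithin_mono 0 Set.Ioc_subset_Icc_self
  -- take the limit
  have hfinal1 : Filter.Tendsto (fun ε => F r - F ε) (nhdsWithin 0 (Set.Ioi 0))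
      (nhds (F r - 0)) := tendsto_const_nhds.sub hF0
  have hfinal2 : Filter.Tendsto (fun ε => F r - F ε) (nhdsWithin 0 (Set.Ioi 0))
      (nhds ((lam - c) * ∫ t in (0:ℝ)..r, g t)) := by
    refine Filter.Tendsto.congr' ?_ (hIcont.const_mul (lam - c))
    filter_upwards [Ioo_mem_nhdsGT_of_mem (Set.mem_Ico.2 ⟨le_refl (0:ℝ), hr0⟩)] with ε hε
    exact (key ε hε).symm
  have hlim := tendsto_nhds_unique hfinal1 hfinal2
  rw [sub_zero] at hlim
  have hFr : F r = deriv a r + c * ((Real.cos r / Real.sin r) * a r) := rfl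
  rw [hFr] at hlim
  linarith [hlim]
end

section
/- Let m ≥ 2 be an integer. Define F(x) = ∫₀^x sin(t)^{m−1} dt, a₁(r) = m·F(r)/sin(r)^{m−1} for r ∈ (0,π), and for α ∈ (0,π) with 2F(α) < F(π) let β(α) ∈ (0,π) be given by F(β(α)) = 2F(α). Set σ_Ω(α) = (m−1)·cos(α)/sin(α) and σ_B(α) = a₁'(π−β(α))/a₁(π−β(α)). Then σ_Ω(α)/σ_B(α) → 2^{1/m} as α → 0⁺; in particular, since 2^{1/m} > 1, there exists α ∈ (0,π/2) with 2F(α) < F(π) such that σ_Ω(α) > σ_B(α). -/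
open Real MeasureTheory intervalIntegral Set Filter

noncomputable def GG (n : ℕ) : ℝ → ℝ := fun x => ∫ t in (0:ℝ)..x, Real.sin t ^ n

lemma GG_int (n : ℕ) (a b : ℝ) : IntervalIntegrable (fun t => Real.sin t ^ n) volume a b :=
  (Real.continuous_sin.pow n).intervalIntegrable a b

lemma GG_deriv (n : ℕ) (x : ℝ) : HasDerivAt (GG n) (Real.sin x ^ n) x :=
  intervalIntegral.integral_hasDerivAt_right (GG_int n 0 x)
    ((Real.continuous_sin.pow n).stronglyMeasurable.stronglyMeasurableAtFilter)
    (Real.continuous_sin.pow n).continuousAt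

lemma GG_cont (n : ℕ) : Continuous (GG n) :=
  continuous_iff_continuousAt.2 fun x => (GG_deriv n x).continuousAt

lemma GG_zero (n : ℕ) : GG n 0 = 0 := intervalIntegral.integral_same

lemma GG_mono (n : ℕ) : StrictMonoOn (GG n) (Set.Icc 0 π) := by
  apply strictMonoOn_of_deriv_pos (convex_Icc 0 π) (GG_cont n).continuousOn
  intro x hx
  rw [interior_Icc] at hx
  rw [(GG_deriv n x).deriv]
  exact pow_pos (Real.sin_pos_of_pos_of_lt_pi hx.1 hx.2) n

lemma GG_pos (n : ℕ) {x : ℝ} (hx : 0 < x) (hx' : x ≤ π) : 0 < GG n x := by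
  have := GG_mono n (Set.mem_Icc.2 ⟨le_refl 0, Real.pi_pos.le⟩) (Set.mem_Icc.2 ⟨hx.le, hx'⟩) hx
  rwa [GG_zero] at this

lemma GG_le (n : ℕ) {x : ℝ} (hx : 0 ≤ x) (hx' : x ≤ π) :
    GG n x ≤ x ^ (n+1) / (n+1) := by
  have h1 : GG n x ≤ ∫ t in (0:ℝ)..x, t ^ n := by
    apply intervalIntegral.integral_mono_on hx (GG_int n 0 x)
      ((continuous_pow n).intervalIntegrable 0 x)
    intro t ht
    exact pow_le_pow_left₀ (Real.sin_nonneg_of_nonneg_of_le_pi ht.1 (ht.2.trans hx'))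
      (Real.sin_le ht.1) n
  rwa [integral_pow, zero_pow (Nat.succ_ne_zero n), sub_zero] at h1

lemma le_GG (n : ℕ) {x : ℝ} (hx : 0 ≤ x) (hx' : x ≤ π) :
    Real.sin x ^ (n+1) / (n+1) ≤ GG n x := by
  have key : ∫ t in (0:ℝ)..x, Real.sin t ^ n * Real.cos t
      = Real.sin x ^ (n+1) / (n+1) := by
    have : ∀ t ∈ Set.uIcc (0:ℝ) x, HasDerivAt (fun s => Real.sin s ^ (n+1) / (n+1))
        (Real.sin t ^ n * Real.cos t) t := by
      intro t _
      have h := ((Real.hasDerivAt_sin t).pow (n+1)).div_const (n+1)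
      have : ((n+1:ℕ):ℝ) * Real.sin t ^ (n + 1 - 1) * Real.cos t / (n+1)
          = Real.sin t ^ n * Real.cos t := by
        field_simp
        rw [Nat.add_sub_cancel]; push_cast; ring
      rwa [this] at h
    rw [intervalIntegral.integral_eq_sub_of_hasDerivAt this
      (((Real.continuous_sin.pow n).mul Real.continuous_cos).intervalIntegrable 0 x)]
    simp
  rw [← key]
  apply intervalIntegral.integral_mono_on hx
    (((Real.continuous_sin.pow n).mul Real.continuous_cos).intervalIntegrable 0 x)
    (GG_int n 0 x)
  intro t ht
  have hs : 0 ≤ Real.sin t ^ n :=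
    pow_nonneg (Real.sin_nonneg_of_nonneg_of_le_pi ht.1 (ht.2.trans hx')) n
  calc Real.sin t ^ n * Real.cos t ≤ Real.sin t ^ n * 1 :=
        mul_le_mul_of_nonneg_left (Real.cos_le_one t) hs
    _ = Real.sin t ^ n := mul_one _

lemma a1_deriv_div (k : ℕ) {r : ℝ} (hs : Real.sin r ≠ 0) (hG : GG (k+1) r ≠ 0) :
    deriv (fun x => ((k:ℝ)+2) * GG (k+1) x / Real.sin x ^ (k+1)) r
      / (((k:ℝ)+2) * GG (k+1) r / Real.sin r ^ (k+1))
    = Real.sin r ^ (k+1) / GG (k+1) r - ((k:ℝ)+1) * Real.cos r / Real.sin r := by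
  have hnum : HasDerivAt (fun x => ((k:ℝ)+2) * GG (k+1) x)
      (((k:ℝ)+2) * Real.sin r ^ (k+1)) r := (GG_deriv (k+1) r).const_mul _
  have hden : HasDerivAt (fun x => Real.sin x ^ (k+1))
      (((k+1:ℕ):ℝ) * Real.sin r ^ (k+1-1) * Real.cos r) r := (Real.hasDerivAt_sin r).pow (k+1)
  have hdiv := hnum.div hden (pow_ne_zero (k+1) hs)
  rw [show (fun x => ((k:ℝ)+2) * GG (k+1) x / Real.sin x ^ (k+1)) = (fun x => ((k:ℝ)+2) * GG (k+1) x) / (fun x => Real.sin x ^ (k+1)) from rfl, hdiv.deriv]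
  simp only [Nat.add_sub_cancel, Nat.cast_add, Nat.cast_one]
  have hc : ((k:ℝ)+2) ≠ 0 := by positivity
  field_simp
  ring

lemma sin_div_tendsto : Tendsto (fun x => Real.sin x / x) (nhdsWithin 0 (Set.Ioo 0 π)) (nhds 1) := by
  have h := hasDerivAt_iff_tendsto_slope.1 (Real.hasDerivAt_sin 0)
  rw [Real.cos_zero] at h
  have h2 : Tendsto (fun x => Real.sin x / x) (nhdsWithin 0 {(0:ℝ)}ᶜ) (nhds 1) := by
    refine h.congr fun x => ?_
    simp [slope_def_field, div_eq_div_iff]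
  exact h2.mono_left (nhdsWithin_mono 0 (fun x hx => ne_of_gt hx.1))

lemma div_sin_tendsto : Tendsto (fun x => x / Real.sin x) (nhdsWithin 0 (Set.Ioo 0 π)) (nhds 1) := by
  have := (sin_div_tendsto.inv₀ one_ne_zero)
  rw [inv_one] at this
  refine this.congr fun x => ?_
  rw [inv_div]

lemma H_tendsto (k : ℕ) : Tendsto (fun x => GG (k+1) x / Real.sin x ^ (k+2))
    (nhdsWithin 0 (Set.Ioo 0 π)) (nhds (1/((k:ℝ)+2))) := by
  have hup : Tendsto (fun x => (x / Real.sin x) ^ (k+2) / ((k:ℝ)+2))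
      (nhdsWithin 0 (Set.Ioo 0 π)) (nhds (1/((k:ℝ)+2))) := by
    simpa using (div_sin_tendsto.pow (k+2)).div_const ((k:ℝ)+2)
  refine tendsto_of_tendsto_of_tendsto_of_le_of_le' tendsto_const_nhds hup ?_ ?_ <;>
    filter_upwards [self_mem_nhdsWithin] with x hx <;>
    have hsp : 0 < Real.sin x := Real.sin_pos_of_pos_of_lt_pi hx.1 hx.2
  · have hb : Real.sin x ^ (k+2) / ((k:ℝ)+2) ≤ GG (k+1) x := by
      have := le_GG (k+1) hx.1.le hx.2.le
      convert this using 2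
      push_cast; ring
    calc (1:ℝ)/((k:ℝ)+2) = (Real.sin x ^ (k+2) / ((k:ℝ)+2)) / Real.sin x ^ (k+2) := by
          field_simp
      _ ≤ GG (k+1) x / Real.sin x ^ (k+2) := by
          exact (div_le_div_iff_of_pos_right (pow_pos hsp _)).2 hb
  · have hb : GG (k+1) x ≤ x ^ (k+2) / ((k:ℝ)+2) := by
      have := GG_le (k+1) hx.1.le hx.2.le
      convert this using 2
      push_cast; ring
    calc GG (k+1) x / Real.sin x ^ (k+2) ≤ (x ^ (k+2) / ((k:ℝ)+2)) / Real.sin x ^ (k+2) :=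
          (div_le_div_iff_of_pos_right (pow_pos hsp _)).2 hb
      _ = (x / Real.sin x) ^ (k+2) / ((k:ℝ)+2) := by rw [div_pow]; ring

theorem stmt_17 (m : ℕ) (hm : 2 ≤ m) (F a₁ β : ℝ → ℝ)
    (hF : ∀ x, F x = ∫ t in (0:ℝ)..x, Real.sin t ^ (m - 1))
    (ha₁ : ∀ r, a₁ r = (m:ℝ) * F r / Real.sin r ^ (m - 1))
    (hβ : ∀ α ∈ Set.Ioo (0:ℝ) π, 2 * F α < F π →
      β α ∈ Set.Ioo (0:ℝ) π ∧ F (β α) = 2 * F α) :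
    Filter.Tendsto
      (fun α => (((m:ℝ) - 1) * Real.cos α / Real.sin α)
        / (deriv a₁ (π - β α) / a₁ (π - β α)))
      (nhdsWithin 0 {α : ℝ | α ∈ Set.Ioo (0:ℝ) π ∧ 2 * F α < F π})
      (nhds ((2:ℝ) ^ (1 / (m:ℝ)))) ∧
    ∃ α ∈ Set.Ioo (0:ℝ) (π/2), 2 * F α < F π ∧
      deriv a₁ (π - β α) / a₁ (π - β α)
        < ((m:ℝ) - 1) * Real.cos α / Real.sin α := by
  obtain ⟨k, rfl⟩ : ∃ k, m = k + 2 := ⟨m - 2, by omega⟩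
  have hπ : (0:ℝ) < π := Real.pi_pos
  have hcast : ((k+2:ℕ):ℝ) = (k:ℝ) + 2 := by push_cast; ring
  have hcast1 : ((k+2:ℕ):ℝ) - 1 = (k:ℝ) + 1 := by push_cast; ring
  have hFeq : ∀ x, F x = GG (k+1) x := fun x => hF x
  have hFfun : F = GG (k+1) := funext hFeq
  have ha₁' : a₁ = fun r => ((k:ℝ)+2) * GG (k+1) r / Real.sin r ^ (k+1) := by
    funext r
    rw [ha₁ r, hFeq r, hcast, show k+2-1 = k+1 by omega]
  have hFc : Continuous F := hFfun ▸ GG_cont (k+1)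
  have hF0 : F 0 = 0 := hFfun ▸ GG_zero (k+1)
  have hFπ : 0 < F π := hFfun ▸ GG_pos (k+1) hπ le_rfl
  set S := {α : ℝ | α ∈ Set.Ioo (0:ℝ) π ∧ 2 * F α < F π} with hSdef
  set L := nhdsWithin (0:ℝ) S with hLdef
  -- 2 F α < F π eventually near 0 in nhds
  have h2F : ∀ᶠ x in nhds (0:ℝ), 2 * F x < F π := by
    have ht : Tendsto (fun x => 2 * F x) (nhds 0) (nhds (2 * F 0)) :=
      (continuous_const.mul hFc).tendsto 0
    rw [hF0, mul_zero] at ht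
    exact ht.eventually_lt_const hFπ
  -- a small interval inside S
  obtain ⟨δ₀, hδ₀, hδ₀sub⟩ : ∃ δ, 0 < δ ∧ Set.Ioo (0:ℝ) δ ⊆ S := by
    obtain ⟨δ', hδ', hδ'h⟩ := Metric.eventually_nhds_iff.1 h2F
    refine ⟨min δ' π, lt_min hδ' hπ, fun x hx => ?_⟩
    have hx2 : x < δ' := lt_of_lt_of_le hx.2 (min_le_left _ _)
    have hxπ : x < π := lt_of_lt_of_le hx.2 (min_le_right _ _)
    refine ⟨⟨hx.1, hxπ⟩, hδ'h ?_⟩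
    rw [Real.dist_eq, sub_zero, abs_of_pos hx.1]; exact hx2
  have hne : L.NeBot := by
    have h0 : (0:ℝ) ∈ closure (Set.Ioo (0:ℝ) δ₀) := by
      rw [closure_Ioo hδ₀.ne]; exact ⟨le_rfl, hδ₀.le⟩
    have := mem_closure_iff_nhdsWithin_neBot.1 h0
    exact this.mono (nhdsWithin_mono 0 hδ₀sub)
  have hmemS : ∀ᶠ α in L, α ∈ S := self_mem_nhdsWithin
  have hβS : ∀ᶠ α in L, β α ∈ Set.Ioo (0:ℝ) π ∧ F (β α) = 2 * F α :=
    hmemS.mono fun α hα => hβ α hα.1 hα.2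
  have hidt : Tendsto (fun α : ℝ => α) L (nhds 0) :=
    tendsto_id.mono_left nhdsWithin_le_nhds
  have hidIoo : Tendsto (fun α : ℝ => α) L (nhdsWithin 0 (Set.Ioo 0 π)) :=
    tendsto_nhdsWithin_iff.2 ⟨hidt, hmemS.mono fun α hα => hα.1⟩
  -- β tends to 0
  have hβ0 : Tendsto β L (nhds 0) := by
    rw [Metric.tendsto_nhds]
    intro ε hε
    set ε' := min ε π with hε'def
    have hε'pos : 0 < ε' := lt_min hε hπ
    have hε'π : ε' ≤ π := min_le_right _ _
    have hFε' : 0 < F ε' := hFfun ▸ GG_pos (k+1) hε'pos hε'π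
    have hev : ∀ᶠ α in L, 2 * F α < F ε' := by
      have ht : Tendsto (fun α => 2 * F α) L (nhds (2 * F 0)) :=
        ((continuous_const.mul hFc).tendsto 0).comp hidt
      rw [hF0, mul_zero] at ht
      exact ht.eventually_lt_const hFε'
    filter_upwards [hev, hβS] with α h1 h2
    rw [Real.dist_eq, sub_zero, abs_of_pos h2.1.1]
    by_contra hcon
    push_neg at hcon
    have hε'le : ε' ≤ β α := le_trans (min_le_left _ _) hcon
    have : F ε' ≤ F (β α) := by
      rw [hFfun]
      exact (GG_mono (k+1)).monotoneOn ⟨hε'pos.le, hε'π⟩ ⟨h2.1.1.le, h2.1.2.le⟩ hε'le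
    rw [h2.2] at this
    linarith
  have hβIoo : Tendsto β L (nhdsWithin 0 (Set.Ioo 0 π)) :=
    tendsto_nhdsWithin_iff.2 ⟨hβ0, hβS.mono fun α hα => hα.1⟩
  -- H limits
  have hHα : Tendsto (fun α => GG (k+1) α / Real.sin α ^ (k+2)) L (nhds (1/((k:ℝ)+2))) :=
    (H_tendsto k).comp hidIoo
  have hHβ : Tendsto (fun α => GG (k+1) (β α) / Real.sin (β α) ^ (k+2)) L (nhds (1/((k:ℝ)+2))) :=
    (H_tendsto k).comp hβIoo
  -- sin ratio limit
  have hsinq : Tendsto (fun α => Real.sin (β α) / Real.sin α) L (nhds ((2:ℝ) ^ (1/((k:ℝ)+2)))) := by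
    have hq : Tendsto (fun α => 2 * (GG (k+1) α / Real.sin α ^ (k+2))
        / (GG (k+1) (β α) / Real.sin (β α) ^ (k+2))) L (nhds 2) := by
      have := ((tendsto_const_nhds (x := (2:ℝ))).mul hHα).div hHβ (by positivity)
      convert this using 2
      · rfl
      field_simp
    have hq2 : Tendsto (fun α => (2 * (GG (k+1) α / Real.sin α ^ (k+2))
        / (GG (k+1) (β α) / Real.sin (β α) ^ (k+2))) ^ (1/((k:ℝ)+2))) L
        (nhds ((2:ℝ) ^ (1/((k:ℝ)+2)))) :=
      hq.rpow_const (Or.inl two_ne_zero)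
    refine hq2.congr' ?_
    filter_upwards [hmemS, hβS] with α hα hβα
    have hsα : 0 < Real.sin α := Real.sin_pos_of_pos_of_lt_pi hα.1.1 hα.1.2
    have hsβ : 0 < Real.sin (β α) := Real.sin_pos_of_pos_of_lt_pi hβα.1.1 hβα.1.2
    have hGα : 0 < GG (k+1) α := GG_pos (k+1) hα.1.1 hα.1.2.le
    have hGβ : 0 < GG (k+1) (β α) := GG_pos (k+1) hβα.1.1 hβα.1.2.le
    have hFβα : GG (k+1) (β α) = 2 * GG (k+1) α := by
      rw [← hFeq, ← hFeq]; exact hβα.2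
    have hkey : 2 * (GG (k+1) α / Real.sin α ^ (k+2))
        / (GG (k+1) (β α) / Real.sin (β α) ^ (k+2))
        = (Real.sin (β α) / Real.sin α) ^ (k+2) := by
      rw [hFβα, div_pow]
      field_simp
    rw [hkey, ← Real.rpow_natCast (Real.sin (β α) / Real.sin α) (k+2),
      ← Real.rpow_mul (by positivity)]
    push_cast
    rw [mul_one_div_cancel (by positivity : ((k:ℝ)+2) ≠ 0), Real.rpow_one]
  -- limit of F(π - β α)
  have hGπβ : Tendsto (fun α => GG (k+1) (π - β α)) L (nhds (GG (k+1) π)) := by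
    have h1 : Tendsto (fun α => π - β α) L (nhds π) := by
      have := (tendsto_const_nhds (x := π)).sub hβ0
      rwa [sub_zero] at this
    exact ((GG_cont (k+1)).tendsto π).comp h1
  have hGπ : 0 < GG (k+1) π := GG_pos (k+1) hπ le_rfl
  -- eventually β α < π/2
  have hβhalf : ∀ᶠ α in L, β α < π/2 := by
    have := hβ0.eventually_lt_const (by positivity : (0:ℝ) < π/2)
    exact this
  -- combined eventual facts: D positive and R = E
  set E := fun α => (((k:ℝ)+1) * Real.cos α * (Real.sin (β α) / Real.sin α))
      / (Real.sin (β α) ^ (k+2) / GG (k+1) (π - β α) + ((k:ℝ)+1) * Real.cos (β α)) with hEdef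
  have hkeyEv : ∀ᶠ α in L, 0 < deriv a₁ (π - β α) / a₁ (π - β α) ∧
      ((((k+2:ℕ):ℝ) - 1) * Real.cos α / Real.sin α)
        / (deriv a₁ (π - β α) / a₁ (π - β α)) = E α := by
    filter_upwards [hmemS, hβS, hβhalf] with α hα hβα hhalf
    have hsα : 0 < Real.sin α := Real.sin_pos_of_pos_of_lt_pi hα.1.1 hα.1.2
    have hsβ : 0 < Real.sin (β α) := Real.sin_pos_of_pos_of_lt_pi hβα.1.1 hβα.1.2
    have hcβ : 0 < Real.cos (β α) := Real.cos_pos_of_mem_Ioo ⟨by linarith [hβα.1.1], hhalf⟩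
    have hr : π - β α ∈ Set.Ioo (0:ℝ) π := ⟨by linarith [hβα.1.2], by linarith [hβα.1.1]⟩
    have hsr : Real.sin (π - β α) ≠ 0 := by
      rw [Real.sin_pi_sub]; exact hsβ.ne'
    have hGr : 0 < GG (k+1) (π - β α) := GG_pos (k+1) hr.1 hr.2.le
    have hD : deriv a₁ (π - β α) / a₁ (π - β α)
        = Real.sin (β α) ^ (k+1) / GG (k+1) (π - β α)
          + ((k:ℝ)+1) * Real.cos (β α) / Real.sin (β α) := by
      rw [ha₁', a1_deriv_div k hsr hGr.ne', Real.sin_pi_sub, Real.cos_pi_sub]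
      ring
    have hDpos : 0 < deriv a₁ (π - β α) / a₁ (π - β α) := by
      rw [hD]; positivity
    refine ⟨hDpos, ?_⟩
    rw [hcast1, hD, hEdef]
    rw [div_eq_div_iff (by rw [← hD]; exact hDpos.ne') (by positivity)]
    field_simp
    ring
  -- the limit of E
  have hE : Tendsto E L (nhds ((2:ℝ) ^ (1/((k:ℝ)+2)))) := by
    have hcosα : Tendsto (fun α => Real.cos α) L (nhds 1) := by
      have := (Real.continuous_cos.tendsto 0).comp hidt
      rwa [Real.cos_zero] at this
    have hcosβ : Tendsto (fun α => Real.cos (β α)) L (nhds 1) := by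
      have := (Real.continuous_cos.tendsto 0).comp hβ0
      rwa [Real.cos_zero] at this
    have hsinβ : Tendsto (fun α => Real.sin (β α) ^ (k+2)) L (nhds 0) := by
      have h1 : Tendsto (fun α => Real.sin (β α)) L (nhds 0) := by
        have := (Real.continuous_sin.tendsto 0).comp hβ0
        rwa [Real.sin_zero] at this
      have := h1.pow (k+2)
      rwa [zero_pow (by omega : k+2 ≠ 0)] at this
    have hnum : Tendsto (fun α => ((k:ℝ)+1) * Real.cos α * (Real.sin (β α) / Real.sin α)) L
        (nhds (((k:ℝ)+1) * 1 * (2:ℝ) ^ (1/((k:ℝ)+2)))) :=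
      ((tendsto_const_nhds.mul hcosα)).mul hsinq
    have hden : Tendsto (fun α => Real.sin (β α) ^ (k+2) / GG (k+1) (π - β α)
        + ((k:ℝ)+1) * Real.cos (β α)) L (nhds ((0:ℝ) / GG (k+1) π + ((k:ℝ)+1) * 1)) :=
      (hsinβ.div hGπβ hGπ.ne').add (tendsto_const_nhds.mul hcosβ)
    have hden' : (0:ℝ) / GG (k+1) π + ((k:ℝ)+1) * 1 = (k:ℝ)+1 := by
      rw [zero_div, zero_add, mul_one]
    rw [hden'] at hden
    have := hnum.div hden (by positivity)
    rw [hEdef]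
    convert this using 2
    · rfl
    rw [mul_one, mul_comm, mul_div_assoc, div_self (by positivity : ((k:ℝ)+1) ≠ 0), mul_one]
  -- main tendsto
  have hmain : Tendsto
      (fun α => ((((k+2:ℕ):ℝ) - 1) * Real.cos α / Real.sin α)
        / (deriv a₁ (π - β α) / a₁ (π - β α))) L (nhds ((2:ℝ) ^ (1/((k:ℝ)+2)))) :=
    hE.congr' (hkeyEv.mono fun α hα => hα.2.symm)
  constructor
  · simp only [hcast] at hmain ⊢
    exact hmain
  · have h1lt : (1:ℝ) < (2:ℝ) ^ (1/((k:ℝ)+2)) :=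
      (Real.one_lt_rpow_iff_of_pos two_pos).2 (Or.inl ⟨one_lt_two, by positivity⟩)
    have hRgt : ∀ᶠ α in L, 1 < ((((k+2:ℕ):ℝ) - 1) * Real.cos α / Real.sin α)
        / (deriv a₁ (π - β α) / a₁ (π - β α)) := hmain.eventually_const_lt h1lt
    have hαhalf : ∀ᶠ α in L, α < π/2 := hidt.eventually_lt_const (by positivity : (0:ℝ) < π/2)
    obtain ⟨α, hαS, hR, hDpos, hhalf⟩ :=
      (hmemS.and (hRgt.and ((hkeyEv.mono fun α h => h.1).and hαhalf))).exists
    refine ⟨α, ⟨hαS.1.1, hhalf⟩, hαS.2, ?_⟩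
    exact (one_lt_div hDpos).1 hR
end
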